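/- arXiv:2510.17099 — 7 statements merged into one kernel-verified Lean document; each statement's English description precedes it below -/
import Mathlib

section
/- Let C be a finite family of subsets of an n-element ground set. If |C| > ∑_{i=0}^{k-1} binom(n, i), then there exists a set S of size k that is shattered by C, i.e., for every subset A ⊆ S there exists a set T ∈ C with S ∩ T = A. -/
theorem sauer_shelah (n k : ℕ) (C : Finset (Finset (Fin n)))
    (h : ∑ i ∈ Finset.range k, Nat.choose n i < C.card) :
    ∃ S : Finset (Fin n), S.card = k ∧ ∀ A ⊆ S, ∃ T ∈ C, S ∩ T = A := by
  by_contra hcon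
  push_neg at hcon
  -- every shattered set has card < k
  have hlt : ∀ s ∈ C.shatterer, s.card < k := by
    intro s hs
    by_contra hk
    push_neg at hk
    obtain ⟨t, hts, htc⟩ := Finset.exists_subset_card_eq hk
    obtain ⟨A, hA, hAbad⟩ := hcon t htc
    obtain ⟨T, hT, hTA⟩ := (Finset.mem_shatterer.1 hs).mono_right hts hA
    exact hAbad T hT hTA
  have hsub : C.shatterer ⊆ (Finset.range k).biUnion
      (fun i => Finset.powersetCard i (Finset.univ : Finset (Fin n))) := by
    intro s hs
    exact Finset.mem_biUnion.2 ⟨s.card, Finset.mem_range.2 (hlt s hs),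
      Finset.mem_powersetCard_univ.2 rfl⟩
  have := (C.card_le_card_shatterer.trans (Finset.card_le_card hsub)).trans
    Finset.card_biUnion_le
  simp only [Finset.card_powersetCard, Finset.card_univ, Fintype.card_fin] at this
  omega
end

section
/- Let d, m be positive integers with 1 ≤ m ≤ d/2, and let X = {x ∈ {0,1}^d : ∑_i x[i] = m}. Define the dual norm ‖z‖_* = max_{x ∈ X} |⟨x, z⟩| for z ∈ ℝ^d. Then for any y ∈ ℝ^d with ‖y‖_* ≤ 1 and any z ∈ ℝ^d, we have ⟨y, z⟩ ≤ 3‖z‖_∞ + (1/m)‖z‖_1. -/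
open Finset

private lemma subset_sum_bound {d m : ℕ} {y : Fin d → ℝ}
    (hy : ∀ x : Fin d → ℝ, (∀ i, x i = 0 ∨ x i = 1) → (∑ i, x i) = (m : ℝ) →
      |∑ i, x i * y i| ≤ 1)
    {S : Finset (Fin d)} (hS : S.card = m) : |∑ i ∈ S, y i| ≤ 1 := by
  have h1 : ∀ i, (if i ∈ S then (1:ℝ) else 0) = 0 ∨ (if i ∈ S then (1:ℝ) else 0) = 1 := by
    intro i; by_cases h : i ∈ S <;> simp [h]
  have h2 : (∑ i, if i ∈ S then (1:ℝ) else 0) = (m : ℝ) := by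
    simp [Finset.sum_ite_mem, hS]
  have h3 := hy _ h1 h2
  have h4 : (∑ i, (if i ∈ S then (1:ℝ) else 0) * y i) = ∑ i ∈ S, y i := by
    simp [ite_mul, Finset.sum_ite_mem]
  rwa [h4] at h3

private lemma keyB {d m : ℕ} (hm : 1 ≤ m) (hmd : 2 * m ≤ d) {y : Fin d → ℝ}
    (hy : ∀ S : Finset (Fin d), S.card = m → |∑ i ∈ S, y i| ≤ 1)
    (P N : Finset (Fin d))
    (hP : ∀ i ∈ P, 1 / (m:ℝ) < y i)
    (hN : ∀ i ∈ N, y i < -(1 / (m:ℝ)))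
    (hNc : ∀ i ∉ N, -(1 / (m:ℝ)) ≤ y i)
    (hpn : P.card ≤ N.card) :
    ∑ i ∈ P ∪ N, |y i| ≤ 3 := by
  have hmpos : (0:ℝ) < m := by exact_mod_cast hm
  have hinvpos : (0:ℝ) < 1 / m := by positivity
  -- N has fewer than m elements
  have hNcard : N.card < m := by
    by_contra h
    push_neg at h
    obtain ⟨S, hSN, hScard⟩ := Finset.exists_subset_card_eq h
    have hne : S.Nonempty := by rw [← Finset.card_pos, hScard]; omega
    have hlt : ∑ i ∈ S, y i < ∑ i ∈ S, -(1/(m:ℝ)) :=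
      Finset.sum_lt_sum_of_nonempty hne (fun i hi => hN i (hSN hi))
    have hconst : ∑ i ∈ S, -(1/(m:ℝ)) = -1 := by
      rw [Finset.sum_const, hScard, nsmul_eq_mul]; field_simp
    have := (abs_le.mp (hy S hScard)).1
    rw [hconst] at hlt
    linarith
  have hPcard : P.card < m := lt_of_le_of_lt hpn hNcard
  have hdisjPN : Disjoint P N := by
    rw [Finset.disjoint_left]
    intro i hiP hiN
    have h1 := hP i hiP
    have h2 := hN i hiN
    linarith
  have hcompl : m - P.card ≤ ((P ∪ N)ᶜ).card := by
    have h1 : (P ∪ N).card ≤ P.card + N.card := Finset.card_union_le _ _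
    have h2 : ((P ∪ N)ᶜ).card = d - (P ∪ N).card := by
      rw [Finset.card_compl]; simp
    omega
  obtain ⟨T, hTsub, hTcard⟩ := Finset.exists_subset_card_eq hcompl
  have hT'le : m - N.card ≤ T.card := by omega
  obtain ⟨T', hT'sub, hT'card⟩ := Finset.exists_subset_card_eq hT'le
  have hPT : Disjoint P T := Finset.disjoint_left.mpr fun i hiP hiT =>
    (Finset.mem_compl.mp (hTsub hiT)) (Finset.mem_union_left _ hiP)
  have hNT : Disjoint N T' := Finset.disjoint_left.mpr fun i hiN hiT' =>
    (Finset.mem_compl.mp (hTsub (hT'sub hiT'))) (Finset.mem_union_right _ hiN)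
  have hS1card : (P ∪ T).card = m := by
    rw [Finset.card_union_of_disjoint hPT, hTcard]; omega
  have hS1 := abs_le.mp (hy _ hS1card)
  rw [Finset.sum_union hPT] at hS1
  have hS2card : (N ∪ T').card = m := by
    rw [Finset.card_union_of_disjoint hNT, hT'card]; omega
  have hS2 := abs_le.mp (hy _ hS2card)
  rw [Finset.sum_union hNT] at hS2
  have hsplitT : ∑ i ∈ T \ T', y i + ∑ i ∈ T', y i = ∑ i ∈ T, y i :=
    Finset.sum_sdiff hT'sub
  have htail : -(∑ i ∈ T \ T', y i) ≤ 1 := by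
    have h1 : ∑ i ∈ T \ T', -y i ≤ (T \ T').card • (1/(m:ℝ)) := by
      refine Finset.sum_le_card_nsmul _ _ _ (fun i hi => ?_)
      have hiT : i ∈ T := (Finset.mem_sdiff.mp hi).1
      have hiN : i ∉ N := fun h =>
        (Finset.mem_compl.mp (hTsub hiT)) (Finset.mem_union_right _ h)
      have := hNc i hiN
      linarith
    have hcard : ((T \ T').card : ℝ) ≤ m := by
      have h3 : (T \ T').card ≤ T.card := Finset.card_le_card Finset.sdiff_subset
      have h4 : (T \ T').card ≤ m := by omega
      exact_mod_cast h4
    have h5 : ((T \ T').card : ℝ) * (1/(m:ℝ)) ≤ (m:ℝ) * (1/m) :=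
      mul_le_mul_of_nonneg_right hcard (le_of_lt hinvpos)
    have h6 : (m:ℝ) * (1/m) = 1 := by field_simp
    rw [nsmul_eq_mul] at h1
    have h7 : ∑ i ∈ T \ T', -y i = -(∑ i ∈ T \ T', y i) := by
      rw [Finset.sum_neg_distrib]
    linarith
  have hPabs : ∑ i ∈ P, |y i| = ∑ i ∈ P, y i :=
    Finset.sum_congr rfl fun i hi => abs_of_pos (lt_trans hinvpos (hP i hi))
  have hNabs : ∑ i ∈ N, |y i| = -∑ i ∈ N, y i := by
    rw [← Finset.sum_neg_distrib]
    exact Finset.sum_congr rfl fun i hi => abs_of_neg (by have := hN i hi; linarith)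
  rw [Finset.sum_union hdisjPN, hPabs, hNabs]
  linarith [hS1.2, hS2.1]

private lemma keyB' {d m : ℕ} (hm : 1 ≤ m) (hmd : 2 * m ≤ d) {y : Fin d → ℝ}
    (hy : ∀ S : Finset (Fin d), S.card = m → |∑ i ∈ S, y i| ≤ 1)
    (P N : Finset (Fin d))
    (hP : ∀ i ∈ P, 1 / (m:ℝ) < y i)
    (hN : ∀ i ∈ N, y i < -(1 / (m:ℝ)))
    (hPc : ∀ i ∉ P, y i ≤ 1 / (m:ℝ))
    (hNc : ∀ i ∉ N, -(1 / (m:ℝ)) ≤ y i) :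
    ∑ i ∈ P ∪ N, |y i| ≤ 3 := by
  rcases le_total P.card N.card with h | h
  · exact keyB hm hmd hy P N hP hN hNc h
  · have hy' : ∀ S : Finset (Fin d), S.card = m → |∑ i ∈ S, -y i| ≤ 1 := by
      intro S hS
      rw [Finset.sum_neg_distrib, abs_neg]
      exact hy S hS
    have hmain := keyB hm hmd hy' N P
      (fun i hi => by have := hN i hi; linarith)
      (fun i hi => by have := hP i hi; linarith)
      (fun i hi => by have := hPc i hi; linarith) h
    calc ∑ i ∈ P ∪ N, |y i| = ∑ i ∈ N ∪ P, |-y i| := by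
          rw [Finset.union_comm]
          exact Finset.sum_congr rfl fun i _ => (abs_neg _).symm
      _ ≤ 3 := hmain

theorem mset_dual_norm_bound (d m : ℕ) (hm : 1 ≤ m) (hmd : 2 * m ≤ d)
    (y z : Fin d → ℝ)
    (hy : ∀ x : Fin d → ℝ, (∀ i, x i = 0 ∨ x i = 1) → (∑ i, x i) = (m : ℝ) →
      |∑ i, x i * y i| ≤ 1) :
    ∑ i, y i * z i ≤ 3 * (⨆ i, |z i|) + (1 / (m : ℝ)) * ∑ i, |z i| := by
  have hd : 0 < d := by omega
  have hmpos : (0:ℝ) < m := by exact_mod_cast hm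
  have hyS : ∀ S : Finset (Fin d), S.card = m → |∑ i ∈ S, y i| ≤ 1 :=
    fun S hS => subset_sum_bound hy hS
  set P := Finset.univ.filter (fun i => 1/(m:ℝ) < y i) with hPdef
  set N := Finset.univ.filter (fun i => y i < -(1/(m:ℝ))) with hNdef
  have hP : ∀ i ∈ P, 1/(m:ℝ) < y i := fun i hi => (Finset.mem_filter.mp hi).2
  have hN : ∀ i ∈ N, y i < -(1/(m:ℝ)) := fun i hi => (Finset.mem_filter.mp hi).2
  have hPc : ∀ i ∉ P, y i ≤ 1/(m:ℝ) := by
    intro i hi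
    by_contra h
    push_neg at h
    exact hi (Finset.mem_filter.mpr ⟨Finset.mem_univ i, h⟩)
  have hNc : ∀ i ∉ N, -(1/(m:ℝ)) ≤ y i := by
    intro i hi
    by_contra h
    push_neg at h
    exact hi (Finset.mem_filter.mpr ⟨Finset.mem_univ i, h⟩)
  have hB := keyB' hm hmd hyS P N hP hN hPc hNc
  have hbdd : BddAbove (Set.range fun i => |z i|) := Set.Finite.bddAbove (Set.finite_range _)
  have hle_sup : ∀ i, |z i| ≤ ⨆ j, |z j| := fun i => le_ciSup hbdd i
  have hsup_nonneg : 0 ≤ ⨆ j, |z j| := le_trans (abs_nonneg _) (hle_sup ⟨0, hd⟩)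
  have step1 : ∑ i, y i * z i ≤ ∑ i, |y i| * |z i| := by
    refine Finset.sum_le_sum fun i _ => ?_
    calc y i * z i ≤ |y i * z i| := le_abs_self _
      _ = |y i| * |z i| := abs_mul _ _
  have hsplit : ∑ i ∈ P ∪ N, (|y i| * |z i|) + ∑ i ∈ (P ∪ N)ᶜ, (|y i| * |z i|)
      = ∑ i, |y i| * |z i| := Finset.sum_add_sum_compl _ _
  have h1 : ∑ i ∈ P ∪ N, |y i| * |z i| ≤ (∑ i ∈ P ∪ N, |y i|) * (⨆ j, |z j|) := by
    rw [Finset.sum_mul]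
    exact Finset.sum_le_sum fun i _ => mul_le_mul_of_nonneg_left (hle_sup i) (abs_nonneg _)
  have h2 : (∑ i ∈ P ∪ N, |y i|) * (⨆ j, |z j|) ≤ 3 * (⨆ j, |z j|) :=
    mul_le_mul_of_nonneg_right hB hsup_nonneg
  have h3 : ∑ i ∈ (P ∪ N)ᶜ, |y i| * |z i| ≤ ∑ i ∈ (P ∪ N)ᶜ, (1/(m:ℝ)) * |z i| := by
    refine Finset.sum_le_sum fun i hi => ?_
    have hiP : i ∉ P := fun h => (Finset.mem_compl.mp hi) (Finset.mem_union_left _ h)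
    have hiN : i ∉ N := fun h => (Finset.mem_compl.mp hi) (Finset.mem_union_right _ h)
    have h4 : |y i| ≤ 1/(m:ℝ) := abs_le.mpr ⟨hNc i hiN, hPc i hiP⟩
    exact mul_le_mul_of_nonneg_right h4 (abs_nonneg _)
  have h5 : ∑ i ∈ (P ∪ N)ᶜ, (1/(m:ℝ)) * |z i| ≤ ∑ i, (1/(m:ℝ)) * |z i| := by
    refine Finset.sum_le_sum_of_subset_of_nonneg (Finset.subset_univ _) (fun i _ _ => ?_)
    positivity
  have h6 : ∑ i, (1/(m:ℝ)) * |z i| = (1/(m:ℝ)) * ∑ i, |z i| := by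
    rw [Finset.mul_sum]
  linarith
end

section
/- Let d, m be positive integers with 20 ≤ m ≤ d/2. Let X = {x ∈ {0,1}^d : ∑_i x[i] = m} and S = {x ∈ X : |{i ∈ {1,…,m} : x[i] ≠ 1}| ≥ ⌊m/20⌋}. Then |X \ S| / |X| ≤ exp(−(m/20)·ln(d/m)). -/
open Finset

lemma desc_ratio (d m : ℕ) (hmd : m ≤ d) (hd : 0 < d) :
    ∀ a, a ≤ m → ((d - a).choose (m - a) : ℝ) ≤ ((m : ℝ) / d) ^ a * d.choose m := by
  intro a
  induction a with
  | zero => simp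
  | succ a ih =>
    intro ha
    have ham : a ≤ m := by omega
    have had : a < d := by omega
    have key : ((d - a - 1).choose (m - a - 1)) * (d - a) = (d - a).choose (m - a) * (m - a) := by
      have h := Nat.add_one_mul_choose_eq (d - a - 1) (m - a - 1)
      have h1 : d - a - 1 + 1 = d - a := by omega
      have h2 : m - a - 1 + 1 = m - a := by omega
      rw [h1, h2] at h
      rw [mul_comm]
      exact h
    have hda : (0:ℝ) < ((d - a : ℕ) : ℝ) := by
      have : 0 < d - a := by omega
      exact_mod_cast this
    have heq : ((d - (a+1)).choose (m - (a+1)) : ℝ)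
        = ((d - a).choose (m - a) : ℝ) * ((m - a : ℕ) : ℝ) / ((d - a : ℕ) : ℝ) := by
      rw [eq_div_iff (ne_of_gt hda)]
      have h3 : d - (a+1) = d - a - 1 := by omega
      have h4 : m - (a+1) = m - a - 1 := by omega
      rw [h3, h4]
      exact_mod_cast key
    rw [heq]
    have hfrac : ((m - a : ℕ) : ℝ) / ((d - a : ℕ) : ℝ) ≤ (m : ℝ) / d := by
      rw [div_le_div_iff₀ hda (by exact_mod_cast hd)]
      push_cast [Nat.cast_sub ham, Nat.cast_sub had.le]
      have h5 : (a:ℝ) * m ≤ a * d := by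
        have h6 : (m:ℝ) ≤ d := by exact_mod_cast hmd
        nlinarith [Nat.cast_nonneg (α := ℝ) a]
      nlinarith
    calc ((d - a).choose (m - a) : ℝ) * ((m - a : ℕ) : ℝ) / ((d - a : ℕ) : ℝ)
        = ((d - a).choose (m - a) : ℝ) * (((m - a : ℕ) : ℝ) / ((d - a : ℕ) : ℝ)) := by ring
      _ ≤ ((m : ℝ) / d) ^ a * d.choose m * ((m : ℝ) / d) := by
          apply mul_le_mul (ih ham) hfrac (by positivity) (by positivity)
      _ = ((m : ℝ) / d) ^ (a+1) * d.choose m := by ring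

theorem mset_bad_set_large (d m : ℕ) (hm : 20 ≤ m) (hmd : 2 * m ≤ d) :
    let X := Finset.powersetCard m (Finset.univ : Finset (Fin d))
    let S := X.filter (fun A =>
      m / 20 ≤ (((Finset.univ : Finset (Fin d)).filter (fun i => i.val < m)) \ A).card)
    ((X \ S).card : ℝ) / (X.card : ℝ) ≤ Real.exp (-((m : ℝ) / 20) * Real.log ((d : ℝ) / m)) := by
  intro X S
  set M := (Finset.univ : Finset (Fin d)).filter (fun i : Fin d => i.val < m) with hMdef
  set k := m / 20 with hkdef
  set a := m - k + 1 with hadef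
  have hk1 : 1 ≤ k := by rw [hkdef]; omega
  have hkm : k ≤ m := by rw [hkdef]; omega
  have ham : a ≤ m := by omega
  have hmd' : m ≤ d := by omega
  have hd0 : 0 < d := by omega
  -- card of M
  have hM : M.card = m := by
    have himg : M.image Fin.val = Finset.range m := by
      ext x
      simp only [Finset.mem_image, Finset.mem_range, hMdef, Finset.mem_filter, Finset.mem_univ,
        true_and]
      constructor
      · rintro ⟨i, hi, rfl⟩; exact hi
      · intro hx; exact ⟨⟨x, lt_of_lt_of_le hx hmd'⟩, hx, rfl⟩
    calc M.card = (M.image Fin.val).card := (Finset.card_image_of_injective _ Fin.val_injective).symm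
      _ = m := by rw [himg, Finset.card_range]
  -- subset covering
  have hsub : X \ S ⊆ (Finset.powersetCard a M).biUnion (fun T => X.filter (fun A => T ⊆ A)) := by
    intro A hA
    rw [Finset.mem_sdiff] at hA
    obtain ⟨hAX, hAS⟩ := hA
    have hcond : ¬ (k ≤ (M \ A).card) := by
      intro hc
      exact hAS (Finset.mem_filter.mpr ⟨hAX, hc⟩)
    have hMA : (M \ A).card < k := by omega
    have hcards : (M ∩ A).card + (M \ A).card = M.card := Finset.card_inter_add_card_sdiff M A
    have hge : a ≤ (M ∩ A).card := by omega
    obtain ⟨T, hTsub, hTcard⟩ := Finset.exists_subset_card_eq hge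
    refine Finset.mem_biUnion.mpr ⟨T, ?_, ?_⟩
    · exact Finset.mem_powersetCard.mpr ⟨hTsub.trans Finset.inter_subset_left, hTcard⟩
    · exact Finset.mem_filter.mpr ⟨hAX, hTsub.trans Finset.inter_subset_right⟩
  -- card of each piece
  have card1 : ∀ T ∈ Finset.powersetCard a M,
      (X.filter (fun A => T ⊆ A)).card ≤ (d - a).choose (m - a) := by
    intro T hT
    obtain ⟨hTM, hTa⟩ := Finset.mem_powersetCard.mp hT
    have hle : (X.filter (fun A => T ⊆ A)).card
        ≤ (Finset.powersetCard (m - a) ((Finset.univ : Finset (Fin d)) \ T)).card := by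
      apply Finset.card_le_card_of_injOn (fun A => A \ T)
      · intro A hA
        rw [Finset.mem_coe, Finset.mem_filter] at hA
        obtain ⟨hAX, hTA⟩ := hA
        obtain ⟨_, hAc⟩ := Finset.mem_powersetCard.mp hAX
        refine Finset.mem_powersetCard.mpr ⟨Finset.sdiff_subset_sdiff (Finset.subset_univ A)
          Finset.Subset.rfl, ?_⟩
        rw [Finset.card_sdiff_of_subset hTA, hAc, hTa]
      · intro A hA B hB hAB
        rw [Finset.mem_coe, Finset.mem_filter] at hA hB
        have hAB' : A \ T = B \ T := hAB
        have h7 : A \ T ∪ T = B \ T ∪ T := by rw [hAB']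
        rwa [Finset.sdiff_union_of_subset hA.2, Finset.sdiff_union_of_subset hB.2] at h7
    rw [Finset.card_powersetCard, Finset.card_sdiff_of_subset (Finset.subset_univ T),
      Finset.card_univ, Fintype.card_fin, hTa] at hle
    exact hle
  -- overall nat count
  have hcount : (X \ S).card ≤ m.choose a * ((d - a).choose (m - a)) := by
    calc (X \ S).card ≤ ((Finset.powersetCard a M).biUnion
          (fun T => X.filter (fun A => T ⊆ A))).card := Finset.card_le_card hsub
      _ ≤ ∑ T ∈ Finset.powersetCard a M, (X.filter (fun A => T ⊆ A)).card :=
          Finset.card_biUnion_le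
      _ ≤ (Finset.powersetCard a M).card * ((d - a).choose (m - a)) :=
          Finset.sum_le_card_nsmul _ _ _ card1
      _ = m.choose a * ((d - a).choose (m - a)) := by
          rw [Finset.card_powersetCard, hM]
  have hXcard : X.card = d.choose m := by
    rw [Finset.card_powersetCard, Finset.card_univ, Fintype.card_fin]
  -- binomial bound
  have hbin : m.choose a * 20 ^ a ≤ 21 ^ m := by
    have h21 : (21 : ℕ) ^ m = ∑ i ∈ Finset.range (m + 1), 20 ^ i * m.choose i := by
      have h := add_pow (R := ℕ) 20 1 m
      simp only [one_pow, mul_one, Nat.cast_id] at h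
      norm_num at h
      exact h
    rw [h21, mul_comm]
    exact Finset.single_le_sum (f := fun i => 20 ^ i * m.choose i)
      (fun i _ => Nat.zero_le _) (Finset.mem_range.mpr (by omega))
  -- real setup
  have hdR : (0:ℝ) < d := by exact_mod_cast hd0
  have hmR : (0:ℝ) < m := by exact_mod_cast (by omega : 0 < m)
  have hr0 : (0:ℝ) < (m:ℝ)/d := by positivity
  have hr2 : (m:ℝ)/d ≤ 1/2 := by
    rw [div_le_div_iff₀ hdR (by norm_num)]
    have h8 : ((2*m : ℕ):ℝ) ≤ d := by exact_mod_cast hmd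
    push_cast at h8
    linarith
  set t : ℝ := (m:ℝ)/20 with htdef
  have ht0 : 0 ≤ t := by positivity
  have hkR : (k:ℝ) ≤ t := by
    rw [htdef, hkdef]
    exact_mod_cast Nat.cast_div_le
  have haR : (a:ℝ) = (m:ℝ) - k + 1 := by
    rw [hadef]
    push_cast [Nat.cast_sub hkm]
    ring
  have ha19 : 19 * t ≤ (a:ℝ) := by
    rw [haR, htdef] at *
    have : (20:ℝ) ≤ m := by exact_mod_cast hm
    linarith [hkR]
  have he0 : 0 ≤ (a:ℝ) - t := by linarith
  -- the exp target equals (m/d)^t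
  have hexp : Real.exp (-t * Real.log ((d : ℝ) / m)) = ((m:ℝ)/d) ^ t := by
    rw [Real.rpow_def_of_pos hr0]
    congr 1
    rw [Real.log_div (ne_of_gt hdR) (ne_of_gt hmR), Real.log_div (ne_of_gt hmR) (ne_of_gt hdR)]
    ring
  -- key numeric inequality
  have key2 : (21:ℝ) ^ ((m:ℝ)) * 2 ^ t ≤ (40:ℝ) ^ ((a:ℝ)) := by
    have h1 : (40:ℝ) ^ ((19:ℝ) * t) ≤ (40:ℝ) ^ ((a:ℝ)) :=
      Real.rpow_le_rpow_of_exponent_le (by norm_num) (by linarith)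
    refine le_trans ?_ h1
    have hm20 : (m:ℝ) = 20 * t := by rw [htdef]; field_simp
    calc (21:ℝ) ^ ((m:ℝ)) * 2 ^ t = ((21:ℝ) ^ ((20:ℝ))) ^ t * 2 ^ t := by
          rw [← Real.rpow_mul (by norm_num : (0:ℝ) ≤ 21), ← hm20]
      _ = (((21:ℝ) ^ ((20:ℝ))) * 2) ^ t := (Real.mul_rpow (by positivity) (by norm_num)).symm
      _ ≤ ((40:ℝ) ^ ((19:ℝ))) ^ t := by
          apply Real.rpow_le_rpow (by positivity) ?_ ht0
          rw [show (20:ℝ) = ((20:ℕ):ℝ) by norm_num, show (19:ℝ) = ((19:ℕ):ℝ) by norm_num,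
            Real.rpow_natCast, Real.rpow_natCast]
          norm_num
      _ = (40:ℝ) ^ ((19:ℝ) * t) := (Real.rpow_mul (by norm_num) _ _).symm
  -- main real chain
  have hX0 : (0:ℝ) < (X.card : ℝ) := by
    rw [hXcard]
    exact_mod_cast Nat.choose_pos hmd'
  rw [div_le_iff₀ hX0]
  -- core inequality: choose * r^a ≤ r^t
  have hone : ((21:ℝ)^m / (20:ℝ)^a) * ((1/2:ℝ)) ^ ((a:ℝ) - t) ≤ 1 := by
    set P := (21:ℝ) ^ ((m:ℝ)) with hP
    set Q := (20:ℝ) ^ ((a:ℝ)) with hQ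
    set E := (2:ℝ) ^ ((a:ℝ) - t) with hE
    set Tt := (2:ℝ) ^ t with hT2
    have hQ0 : (0:ℝ) < Q := Real.rpow_pos_of_pos (by norm_num) _
    have hE0 : (0:ℝ) < E := Real.rpow_pos_of_pos (by norm_num) _
    have hT0 : (0:ℝ) < Tt := Real.rpow_pos_of_pos (by norm_num) _
    have h40 : (40:ℝ) ^ ((a:ℝ)) = Q * (Tt * E) := by
      rw [hQ, hT2, hE, show (40:ℝ) = 20 * 2 by norm_num,
        Real.mul_rpow (by norm_num) (by norm_num), ← Real.rpow_add (by norm_num : (0:ℝ) < 2)]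
      congr 2
      ring
    have hPQE : P ≤ Q * E := by
      have h9 : P * Tt ≤ Q * E * Tt := by
        rw [show Q * E * Tt = Q * (Tt * E) by ring, ← h40]
        exact key2
      exact le_of_mul_le_mul_right h9 hT0
    have hnat21 : (21:ℝ) ^ m = P := by rw [hP, Real.rpow_natCast]
    have hnat20 : (20:ℝ) ^ a = Q := by rw [hQ, Real.rpow_natCast]
    have hhalf : ((1/2:ℝ)) ^ ((a:ℝ) - t) = E⁻¹ := by
      rw [show (1/2:ℝ) = 2⁻¹ by norm_num, Real.inv_rpow (by norm_num), hE]
    rw [hnat21, hnat20, hhalf, ← div_eq_mul_inv, div_div, div_le_one (by positivity)]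
    exact hPQE
  have hchoose : (m.choose a : ℝ) * (20:ℝ)^a ≤ (21:ℝ)^m := by exact_mod_cast hbin
  have h20a : (0:ℝ) < (20:ℝ)^a := by positivity
  have hchoose' : (m.choose a : ℝ) ≤ (21:ℝ)^m / (20:ℝ)^a := by
    rw [le_div_iff₀ h20a]; exact hchoose
  have hra : ((m:ℝ)/d) ^ a = ((m:ℝ)/d) ^ t * ((m:ℝ)/d) ^ ((a:ℝ) - t) := by
    rw [← Real.rpow_natCast ((m:ℝ)/d) a, ← Real.rpow_add hr0]
    congr 1
    ring
  have core : (m.choose a : ℝ) * ((m:ℝ)/d) ^ a ≤ ((m:ℝ)/d) ^ t := by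
    calc (m.choose a : ℝ) * ((m:ℝ)/d) ^ a
        ≤ ((21:ℝ)^m / (20:ℝ)^a) * (((m:ℝ)/d) ^ t * ((1/2:ℝ)) ^ ((a:ℝ) - t)) := by
          rw [hra]
          apply mul_le_mul hchoose' ?_ (by positivity) (by positivity)
          exact mul_le_mul_of_nonneg_left (Real.rpow_le_rpow hr0.le hr2 he0)
            (Real.rpow_nonneg hr0.le t)
      _ = (((21:ℝ)^m / (20:ℝ)^a) * ((1/2:ℝ)) ^ ((a:ℝ) - t)) * ((m:ℝ)/d) ^ t := by ring
      _ ≤ 1 * ((m:ℝ)/d) ^ t := mul_le_mul_of_nonneg_right hone (Real.rpow_nonneg hr0.le t)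
      _ = ((m:ℝ)/d) ^ t := one_mul _
  calc ((X \ S).card : ℝ)
      ≤ (m.choose a : ℝ) * ((d - a).choose (m - a) : ℝ) := by exact_mod_cast hcount
    _ ≤ (m.choose a : ℝ) * (((m:ℝ)/d) ^ a * d.choose m) :=
        mul_le_mul_of_nonneg_left (desc_ratio d m hmd' hd0 a ham) (Nat.cast_nonneg _)
    _ = ((m.choose a : ℝ) * ((m:ℝ)/d) ^ a) * (d.choose m : ℝ) := by ring
    _ ≤ ((m:ℝ)/d) ^ t * (d.choose m : ℝ) :=
        mul_le_mul_of_nonneg_right core (Nat.cast_nonneg _)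
    _ = Real.exp (-t * Real.log ((d:ℝ)/m)) * (X.card : ℝ) := by rw [hexp, hXcard]
end

section
/- Let G = (V, E) be a finite directed acyclic graph with source s and sink t, where every vertex is reachable from s and reaches t. Let co(X) be the flow polytope: the set of x ∈ [0,1]^E with ∑_{e ∈ δ⁺(s)} x[e] = ∑_{e ∈ δ⁻(t)} x[e] = 1 and flow conservation ∑_{e ∈ δ⁻(v)} x[e] = ∑_{e ∈ δ⁺(v)} x[e] at every internal vertex v. For x̃ ∈ co(X), define the dilated entropy ψ(x̃) = ∑_{e ∈ E} x̃[e]·ln x̃[e] − ∑_{v ∈ V} x̃[v]·ln x̃[v], where x̃[v] := ∑_{e ∈ δ⁺(v)} x̃[e] for v ≠ t and x̃[t] := 1, with 0·ln 0 := 0. Consider the Markovian sampling distribution D(x̃) over s-t paths, where from each vertex u the next edge e = (u,v) ∈ δ⁺(u) is chosen with probability x̃[e]/x̃[u]. Then ψ(x̃) = E_{p ∼ D(x̃)}[ln P(p)], i.e., the dilated entropy equals the negative Shannon entropy of the induced path distribution. -/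
open Classical

/-- `IsWalk esrc edst u v p` : the list of edges `p` forms a walk from `u` to `v`
in the directed graph whose edges `e` go from `esrc e` to `edst e`. -/
def IsWalk {V E : Type*} (esrc edst : E → V) : V → V → List E → Prop
  | u, v, [] => u = v
  | u, v, e :: es => esrc e = u ∧ IsWalk esrc edst (edst e) v es

/-- Mass of a vertex: `1` at the sink `t`, and the total outgoing edge mass otherwise. -/
noncomputable def vertexMass {V E : Type*} [Fintype E] (esrc : E → V) (t : V)
    (x : E → ℝ) (v : V) : ℝ :=
  if v = t then 1 else ∑ e : E, if esrc e = v then x e else 0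

/-- The dilated entropy regularizer on a DAG. -/
noncomputable def dilatedEntropy {V E : Type*} [Fintype V] [Fintype E] (esrc : E → V)
    (t : V) (x : E → ℝ) : ℝ :=
  (∑ e : E, x e * Real.log (x e)) -
    ∑ v : V, vertexMass esrc t x v * Real.log (vertexMass esrc t x v)

/-- Probability of a path under the Markovian sampling procedure. -/
noncomputable def pathProb {V E : Type*} [Fintype E] (esrc : E → V) (t : V)
    (x : E → ℝ) (p : List E) : ℝ :=
  (p.map (fun e => x e / vertexMass esrc t x (esrc e))).prod

section Walks

variable {V E : Type*} {esrc edst : E → V}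

theorem isWalk_nil {u v : V} : IsWalk esrc edst u v [] ↔ u = v := Iff.rfl

theorem isWalk_cons {u v : V} {e : E} {p : List E} :
    IsWalk esrc edst u v (e :: p) ↔ esrc e = u ∧ IsWalk esrc edst (edst e) v p := Iff.rfl

theorem isWalk_concat {u v : V} {e : E} {q : List E} :
    IsWalk esrc edst u v (q ++ [e]) ↔ IsWalk esrc edst u (esrc e) q ∧ edst e = v := by
  induction q generalizing u with
  | nil => simp [isWalk_nil, isWalk_cons, eq_comm]
  | cons e' q ih => simp [isWalk_cons, ih, and_assoc]

theorem walk_rank {rank : V → ℕ} (hrank : ∀ e, rank (esrc e) < rank (edst e))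
    {u v : V} {p : List E} (h : IsWalk esrc edst u v p) :
    p.length + rank u ≤ rank v ∨ (p = [] ∧ u = v) := by
  induction p generalizing u with
  | nil => exact Or.inr ⟨rfl, h⟩
  | cons e q ih =>
    rcases h with ⟨rfl, hq⟩
    rcases ih hq with h1 | ⟨rfl, rfl⟩
    · left
      have := hrank e
      simp only [List.length_cons]
      omega
    · left
      have := hrank e
      simp only [List.length_nil, List.length_cons]
      omega

theorem walk_length_le {rank : V → ℕ} (hrank : ∀ e, rank (esrc e) < rank (edst e))
    {u v : V} {p : List E} (h : IsWalk esrc edst u v p) : p.length ≤ rank v := by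
  rcases walk_rank hrank h with h1 | ⟨rfl, rfl⟩
  · omega
  · simp

theorem walk_rank_lt {rank : V → ℕ} (hrank : ∀ e, rank (esrc e) < rank (edst e))
    {u v : V} {p : List E} (h : IsWalk esrc edst u v p) (hne : p ≠ []) :
    rank u < rank v := by
  rcases walk_rank hrank h with h1 | ⟨h2, rfl⟩
  · have : 1 ≤ p.length := List.length_pos_iff.2 hne
    omega
  · exact absurd h2 hne

end Walks

noncomputable def listsLe (E : Type*) [Fintype E] : ℕ → Finset (List E)
  | 0 => {[]}
  | n+1 => insert [] (Finset.univ.biUnion fun e => (listsLe E n).image (e :: ·))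

theorem mem_listsLe {E : Type*} [Fintype E] {n : ℕ} {p : List E} :
    p ∈ listsLe E n ↔ p.length ≤ n := by
  induction n generalizing p with
  | zero => simp [listsLe, List.length_eq_zero_iff]
  | succ n ih =>
    simp only [listsLe, Finset.mem_insert, Finset.mem_biUnion, Finset.mem_univ, true_and,
      Finset.mem_image]
    constructor
    · rintro (rfl | ⟨e, q, hq, rfl⟩)
      · simp
      · simp [Nat.succ_le_succ (ih.1 hq)]
    · intro hp
      cases p with
      | nil => exact Or.inl rfl
      | cons e q =>
        exact Or.inr ⟨e, q, ih.2 (by simpa using hp), rfl⟩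

noncomputable def walkSet {V E : Type*} [Fintype V] [Fintype E] (esrc edst : E → V)
    (rank : V → ℕ) (a b : V) : Finset (List E) :=
  (listsLe E (Finset.univ.sup rank)).filter (fun p => IsWalk esrc edst a b p)

section WalkSet

variable {V E : Type*} [Fintype V] [Fintype E] {esrc edst : E → V} {rank : V → ℕ}

theorem mem_walkSet (hrank : ∀ e, rank (esrc e) < rank (edst e)) {a b : V} {p : List E} :
    p ∈ walkSet esrc edst rank a b ↔ IsWalk esrc edst a b p := by
  rw [walkSet, Finset.mem_filter, mem_listsLe]
  refine ⟨fun h => h.2, fun h => ⟨?_, h⟩⟩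
  exact le_trans (walk_length_le hrank h) (Finset.le_sup (Finset.mem_univ b))

theorem walkSet_self (hrank : ∀ e, rank (esrc e) < rank (edst e)) (a : V) :
    walkSet esrc edst rank a a = ({[]} : Finset (List E)) := by
  ext p
  rw [mem_walkSet hrank, Finset.mem_singleton]
  constructor
  · intro h
    by_contra hne
    exact absurd (walk_rank_lt hrank h hne) (lt_irrefl _)
  · rintro rfl; exact rfl

theorem walkSet_empty (hrank : ∀ e, rank (esrc e) < rank (edst e)) {a b : V}
    (hab : a ≠ b) (hr : rank b ≤ rank a) :
    walkSet esrc edst rank a b = (∅ : Finset (List E)) := by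
  ext p
  simp only [Finset.notMem_empty, iff_false, mem_walkSet hrank]
  intro h
  rcases eq_or_ne p [] with rfl | hne
  · exact hab h
  · exact absurd (walk_rank_lt hrank h hne) (not_lt.2 hr)

theorem sum_walkSet_first (hrank : ∀ e, rank (esrc e) < rank (edst e)) {a b : V}
    (hab : a ≠ b) (f : List E → ℝ) :
    ∑ p ∈ walkSet esrc edst rank a b, f p
      = ∑ e : E, if esrc e = a then
          ∑ q ∈ walkSet esrc edst rank (edst e) b, f (e :: q) else 0 := by
  have hset : walkSet esrc edst rank a b
      = Finset.univ.biUnion (fun e : E =>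
          if esrc e = a then (walkSet esrc edst rank (edst e) b).image (e :: ·) else ∅) := by
    ext p
    simp only [Finset.mem_biUnion, Finset.mem_univ, true_and, mem_walkSet hrank]
    constructor
    · intro hp
      cases p with
      | nil => exact absurd hp hab
      | cons e q =>
        refine ⟨e, ?_⟩
        rw [if_pos hp.1]
        exact Finset.mem_image_of_mem _ ((mem_walkSet hrank).2 hp.2)
    · rintro ⟨e, hp⟩
      by_cases he : esrc e = a
      · rw [if_pos he] at hp
        rcases Finset.mem_image.1 hp with ⟨q, hq, rfl⟩
        exact ⟨he, (mem_walkSet hrank).1 hq⟩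
      · rw [if_neg he] at hp; exact absurd hp (Finset.notMem_empty p)
  have hdisj : (↑(Finset.univ : Finset E) : Set E).PairwiseDisjoint (fun e : E =>
      if esrc e = a then (walkSet esrc edst rank (edst e) b).image (e :: ·) else ∅) := by
    intro e _ e' _ hne
    refine Finset.disjoint_left.2 ?_
    intro p hp hp'
    simp only at hp hp'
    by_cases he : esrc e = a
    · rw [if_pos he] at hp
      rcases Finset.mem_image.1 hp with ⟨q, _, rfl⟩
      by_cases he' : esrc e' = a
      · rw [if_pos he'] at hp'
        rcases Finset.mem_image.1 hp' with ⟨q', _, heq⟩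
        exact hne (List.head_eq_of_cons_eq heq).symm
      · rw [if_neg he'] at hp'; exact Finset.notMem_empty _ hp'
    · rw [if_neg he] at hp; exact Finset.notMem_empty _ hp
  rw [hset, Finset.sum_biUnion hdisj]
  refine Finset.sum_congr rfl fun e _ => ?_
  by_cases he : esrc e = a
  · rw [if_pos he, if_pos he, Finset.sum_image (fun q _ q' _ h => List.tail_eq_of_cons_eq h)]
  · rw [if_neg he, if_neg he, Finset.sum_empty]

theorem sum_walkSet_last (hrank : ∀ e, rank (esrc e) < rank (edst e)) {a b : V}
    (hab : a ≠ b) (f : List E → ℝ) :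
    ∑ p ∈ walkSet esrc edst rank a b, f p
      = ∑ e : E, if edst e = b then
          ∑ q ∈ walkSet esrc edst rank a (esrc e), f (q ++ [e]) else 0 := by
  have hset : walkSet esrc edst rank a b
      = Finset.univ.biUnion (fun e : E =>
          if edst e = b then (walkSet esrc edst rank a (esrc e)).image (· ++ [e]) else ∅) := by
    ext p
    simp only [Finset.mem_biUnion, Finset.mem_univ, true_and, mem_walkSet hrank]
    constructor
    · intro hp
      rcases List.eq_nil_or_concat p with rfl | ⟨q, e, rfl⟩
      · exact absurd hp hab
      · rw [List.concat_eq_append] at hp ⊢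
        rcases isWalk_concat.1 hp with ⟨hq, he⟩
        refine ⟨e, ?_⟩
        rw [if_pos he]
        exact Finset.mem_image_of_mem _ ((mem_walkSet hrank).2 hq)
    · rintro ⟨e, hp⟩
      by_cases he : edst e = b
      · rw [if_pos he] at hp
        rcases Finset.mem_image.1 hp with ⟨q, hq, rfl⟩
        exact isWalk_concat.2 ⟨(mem_walkSet hrank).1 hq, he⟩
      · rw [if_neg he] at hp; exact absurd hp (Finset.notMem_empty p)
  have hinj : ∀ e : E, ∀ q ∈ walkSet esrc edst rank a (esrc e),
      ∀ q' ∈ walkSet esrc edst rank a (esrc e), q ++ [e] = q' ++ [e] → q = q' := by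
    intro e q _ q' _ h
    simpa using h
  have hdisj : (↑(Finset.univ : Finset E) : Set E).PairwiseDisjoint (fun e : E =>
      if edst e = b then (walkSet esrc edst rank a (esrc e)).image (· ++ [e]) else ∅) := by
    intro e _ e' _ hne
    refine Finset.disjoint_left.2 ?_
    intro p hp hp'
    simp only at hp hp'
    by_cases he : edst e = b
    · rw [if_pos he] at hp
      rcases Finset.mem_image.1 hp with ⟨q, _, rfl⟩
      by_cases he' : edst e' = b
      · rw [if_pos he'] at hp'
        rcases Finset.mem_image.1 hp' with ⟨q', _, heq⟩
        have : e' = e := by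
          have h2 := congrArg List.getLast? heq
          simpa using h2
        exact hne this.symm
      · rw [if_neg he'] at hp'; exact Finset.notMem_empty _ hp'
    · rw [if_neg he] at hp; exact Finset.notMem_empty _ hp
  rw [hset, Finset.sum_biUnion hdisj]
  refine Finset.sum_congr rfl fun e _ => ?_
  by_cases he : edst e = b
  · rw [if_pos he, if_pos he, Finset.sum_image (hinj e)]
  · rw [if_neg he, if_neg he, Finset.sum_empty]

end WalkSet

section Probs

variable {V E : Type*} [Fintype E] {esrc : E → V} {t : V} {x : E → ℝ}

theorem pathProb_nil : pathProb esrc t x [] = 1 := by simp [pathProb]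

theorem pathProb_cons {e : E} {p : List E} :
    pathProb esrc t x (e :: p)
      = (x e / vertexMass esrc t x (esrc e)) * pathProb esrc t x p := by
  simp [pathProb]

theorem pathProb_concat {e : E} {p : List E} :
    pathProb esrc t x (p ++ [e])
      = pathProb esrc t x p * (x e / vertexMass esrc t x (esrc e)) := by
  simp [pathProb]

theorem vertexMass_nonneg (hx0 : ∀ e, 0 ≤ x e) (v : V) : 0 ≤ vertexMass esrc t x v := by
  unfold vertexMass
  split
  · norm_num
  · exact Finset.sum_nonneg fun e _ => by split <;> simp [hx0 e]

theorem pathProb_nonneg (hx0 : ∀ e, 0 ≤ x e) (p : List E) : 0 ≤ pathProb esrc t x p := by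
  unfold pathProb
  apply List.prod_nonneg
  intro a ha
  rcases List.mem_map.1 ha with ⟨e, _, rfl⟩
  exact div_nonneg (hx0 e) (vertexMass_nonneg hx0 _)

end Probs

theorem prod_mul_log_prod : ∀ (l : List ℝ), (∀ a ∈ l, 0 ≤ a) →
    l.prod * Real.log l.prod = l.prod * (l.map Real.log).sum := by
  intro l
  induction l with
  | nil => simp
  | cons a l ih =>
    intro h
    have ha : 0 ≤ a := h a List.mem_cons_self
    have hl : ∀ b ∈ l, 0 ≤ b := fun b hb => h b (List.mem_cons_of_mem a hb)
    have hP : 0 ≤ l.prod := List.prod_nonneg hl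
    simp only [List.prod_cons, List.map_cons, List.sum_cons]
    rcases eq_or_lt_of_le ha with rfl | ha'
    · simp
    · rcases eq_or_lt_of_le hP with hP0 | hP'
      · rw [← hP0]; ring
      · rw [Real.log_mul (ne_of_gt ha') (ne_of_gt hP')]
        have := ih hl
        ring_nf
        ring_nf at this
        nlinarith [this]

noncomputable def cnt {E : Type*} (e : E) (p : List E) : ℝ :=
  (p.map fun e' => if e' = e then (1:ℝ) else 0).sum

theorem cnt_nil {E : Type*} (e : E) : cnt e ([] : List E) = 0 := by simp [cnt]

theorem cnt_cons {E : Type*} (e a : E) (p : List E) :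
    cnt e (a :: p) = (if a = e then (1:ℝ) else 0) + cnt e p := by simp [cnt]

theorem cnt_concat {E : Type*} (e a : E) (p : List E) :
    cnt e (p ++ [a]) = cnt e p + (if a = e then (1:ℝ) else 0) := by simp [cnt]

theorem map_sum_eq_cnt {E : Type*} [Fintype E] (c : E → ℝ) : ∀ (p : List E),
    (p.map c).sum = ∑ e : E, cnt e p * c e := by
  intro p
  induction p with
  | nil => simp [cnt_nil]
  | cons a q ih =>
    simp only [List.map_cons, List.sum_cons, ih, cnt_cons, add_mul, Finset.sum_add_distrib]
    have : ∑ e : E, (if a = e then (1:ℝ) else 0) * c e = c a := by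
      rw [Finset.sum_congr rfl (fun e _ => by rw [ite_mul, one_mul, zero_mul])]
      simp [Finset.sum_ite_eq]
    rw [this]
theorem dilated_entropy_eq_neg_shannon {V E : Type*} [Fintype V] [Fintype E]
    (esrc edst : E → V) (s t : V)
    (rank : V → ℕ) (hrank : ∀ e, rank (esrc e) < rank (edst e)) (hst : s ≠ t)
    (X : Finset (List E)) (hX : ∀ p, p ∈ X ↔ IsWalk esrc edst s t p)
    (x : E → ℝ) (hx0 : ∀ e, 0 ≤ x e) (hx1 : ∀ e, x e ≤ 1)
    (hsrc : (∑ e : E, if esrc e = s then x e else 0) = 1)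
    (hsink : (∑ e : E, if edst e = t then x e else 0) = 1)
    (hcons : ∀ v, v ≠ s → v ≠ t →
      (∑ e : E, if edst e = v then x e else 0) = (∑ e : E, if esrc e = v then x e else 0)) :
    dilatedEntropy esrc t x
      = ∑ p ∈ X, pathProb esrc t x p * Real.log (pathProb esrc t x p) := by
  have hm0 : ∀ v, 0 ≤ vertexMass esrc t x v := vertexMass_nonneg hx0
  have hmt : vertexMass esrc t x t = 1 := by simp [vertexMass]
  have hout : ∀ v, v ≠ t → vertexMass esrc t x v = ∑ e : E, if esrc e = v then x e else 0 := by
    intro v hv; simp [vertexMass, hv]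
  have hms : vertexMass esrc t x s = 1 := by rw [hout s hst, hsrc]
  have single_out : ∀ e : E, x e ≤ ∑ e' : E, if esrc e' = esrc e then x e' else 0 := by
    intro e
    have := Finset.single_le_sum (f := fun e' : E => if esrc e' = esrc e then x e' else 0)
      (fun e' _ => by split; exacts [hx0 e', le_rfl]) (Finset.mem_univ e)
    simpa using this
  have single_in : ∀ e : E, x e ≤ ∑ e' : E, if edst e' = edst e then x e' else 0 := by
    intro e
    have := Finset.single_le_sum (f := fun e' : E => if edst e' = edst e then x e' else 0)
      (fun e' _ => by split; exacts [hx0 e', le_rfl]) (Finset.mem_univ e)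
    simpa using this
  have hxle : ∀ e : E, esrc e ≠ t → x e ≤ vertexMass esrc t x (esrc e) := by
    intro e h; rw [hout _ h]; exact single_out e
  have hmq : ∀ e : E, vertexMass esrc t x (esrc e) = 0 → x e = 0 := by
    intro e h
    rcases eq_or_ne (esrc e) t with ht | ht
    · rw [ht, hmt] at h; norm_num at h
    · have h1 := hxle e ht
      rw [h] at h1
      exact le_antisymm h1 (hx0 e)
  have hmw_pos : ∀ e : E, 0 < x e → edst e ≠ t → 0 < vertexMass esrc t x (edst e) := by
    intro e hxe ht
    rcases eq_or_ne (edst e) s with hs' | hs'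
    · rw [hs', hms]; norm_num
    · rw [hout _ ht, ← hcons _ hs' ht]
      exact lt_of_lt_of_le hxe (single_in e)
  have hpos_edge : ∀ v : V, 0 < (∑ e : E, if edst e = v then x e else 0) →
      ∃ e, edst e = v ∧ 0 < x e := by
    intro v hv
    by_contra hc
    push_neg at hc
    have hz : (∑ e : E, if edst e = v then x e else 0) = 0 := by
      refine Finset.sum_eq_zero fun e _ => ?_
      split
      next h => exact le_antisymm (hc e h) (hx0 e)
      next => rfl
    rw [hz] at hv
    exact lt_irrefl _ hv
  have C1 : ∀ n : ℕ, ∀ v : V, rank v < n → v ≠ s →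
      0 < (∑ e : E, if edst e = v then x e else 0) → rank s < rank v := by
    intro n
    induction n with
    | zero => intro v hv; omega
    | succ n ih =>
      intro v hv hvs hpos
      obtain ⟨e, he, hxe⟩ := hpos_edge v hpos
      have hru : rank (esrc e) < rank v := he ▸ hrank e
      rcases eq_or_ne (esrc e) s with h | hus
      · rw [h] at hru; exact hru
      · rcases eq_or_ne (esrc e) t with h' | hut
        · have h1 : (0:ℝ) < ∑ e' : E, if edst e' = t then x e' else 0 := by
            rw [hsink]; norm_num
          rw [h'] at hru
          have h2 := ih t (by omega) (Ne.symm hst) h1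
          omega
        · have h1 : (0:ℝ) < ∑ e' : E, if edst e' = esrc e then x e' else 0 := by
            rw [hcons _ hus hut]
            exact lt_of_lt_of_le hxe (single_out e)
          have h2 := ih (esrc e) (by omega) hus h1
          omega
  have L1 : ∀ e : E, edst e = s → x e = 0 := by
    intro e he
    by_contra hne
    have hxe : 0 < x e := lt_of_le_of_ne (hx0 e) (Ne.symm hne)
    have hru : rank (esrc e) < rank s := he ▸ hrank e
    rcases eq_or_ne (esrc e) t with h' | hut
    · have h2 := C1 (rank t + 1) t (lt_add_one _) (Ne.symm hst) (by rw [hsink]; norm_num)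
      rw [h'] at hru; omega
    · rcases eq_or_ne (esrc e) s with h | hus
      · rw [h] at hru; omega
      · have h1 : (0:ℝ) < ∑ e' : E, if edst e' = esrc e then x e' else 0 := by
          rw [hcons _ hus hut]
          exact lt_of_lt_of_le hxe (single_out e)
        have h2 := C1 (rank (esrc e) + 1) (esrc e) (lt_add_one _) hus h1
        omega
  have B1 : ∀ n : ℕ, ∀ v : V, Finset.univ.sup rank - rank v < n →
      (0 < vertexMass esrc t x v ∨ v = t) →
      (∑ p ∈ walkSet esrc edst rank v t, pathProb esrc t x p) = 1 := by
    intro n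
    induction n with
    | zero => intro v h; omega
    | succ n ih =>
      intro v hv hpos
      rcases eq_or_ne v t with rfl | hvt
      · rw [walkSet_self hrank, Finset.sum_singleton, pathProb_nil]
      · have hmv : 0 < vertexMass esrc t x v := hpos.resolve_right hvt
        rw [sum_walkSet_first hrank hvt]
        have hterm : ∀ e : E,
            (if esrc e = v then
              ∑ q ∈ walkSet esrc edst rank (edst e) t, pathProb esrc t x (e :: q) else 0)
            = (if esrc e = v then x e / vertexMass esrc t x v else 0) := by
          intro e
          split
          next he =>
            rw [Finset.sum_congr rfl fun q _ => pathProb_cons, ← Finset.mul_sum]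
            rcases eq_or_lt_of_le (hx0 e) with h0 | hxe
            · rw [← h0]; simp
            · have hA1 : (∑ q ∈ walkSet esrc edst rank (edst e) t, pathProb esrc t x q) = 1 := by
                apply ih (edst e) ?_ ?_
                · have h3 := hrank e
                  have h4 : rank (edst e) ≤ Finset.univ.sup rank :=
                    Finset.le_sup (Finset.mem_univ _)
                  rw [he] at h3
                  omega
                · rcases eq_or_ne (edst e) t with h | h
                  · exact Or.inr h
                  · exact Or.inl (hmw_pos e hxe h)
              rw [hA1, mul_one, he]
          next => rfl
        rw [Finset.sum_congr rfl fun e _ => hterm e]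
        have hdiv : ∑ e : E, (if esrc e = v then x e / vertexMass esrc t x v else 0)
            = (∑ e : E, if esrc e = v then x e else 0) / vertexMass esrc t x v := by
          rw [Finset.sum_div]
          exact Finset.sum_congr rfl fun e _ => by split <;> simp
        rw [hdiv, ← hout v hvt, div_self (ne_of_gt hmv)]
  have A1 : ∀ n : ℕ, ∀ v : V, rank v < n →
      (∑ p ∈ walkSet esrc edst rank s v, pathProb esrc t x p) = vertexMass esrc t x v := by
    intro n
    induction n with
    | zero => intro v h; omega
    | succ n ih =>
      intro v hv
      rcases eq_or_ne v s with rfl | hvs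
      · rw [walkSet_self hrank, Finset.sum_singleton, pathProb_nil, hms]
      · rw [sum_walkSet_last hrank (Ne.symm hvs)]
        have hterm : ∀ e : E,
            (if edst e = v then
              ∑ q ∈ walkSet esrc edst rank s (esrc e), pathProb esrc t x (q ++ [e]) else 0)
            = (if edst e = v then x e else 0) := by
          intro e
          split
          next he =>
            rw [Finset.sum_congr rfl fun q _ => pathProb_concat, ← Finset.sum_mul]
            have hA : (∑ q ∈ walkSet esrc edst rank s (esrc e), pathProb esrc t x q)
                = vertexMass esrc t x (esrc e) := by
              apply ih
              have h3 := hrank e; rw [he] at h3; omega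
            rw [hA]
            rcases eq_or_ne (vertexMass esrc t x (esrc e)) 0 with h0 | h0
            · rw [h0, hmq e h0]; simp
            · field_simp
          next => rfl
        rw [Finset.sum_congr rfl fun e _ => hterm e]
        rcases eq_or_ne v t with rfl | hvt
        · rw [hsink, hmt]
        · rw [hcons v hvs hvt, hout v hvt]
  have N1 : ∀ e₀ : E, ∀ n : ℕ, ∀ v : V, rank v < n →
      (∑ p ∈ walkSet esrc edst rank s v, pathProb esrc t x p * cnt e₀ p)
        = x e₀ * ∑ p ∈ walkSet esrc edst rank (edst e₀) v, pathProb esrc t x p := by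
    intro e₀ n
    induction n with
    | zero => intro v h; omega
    | succ n ih =>
      intro v hv
      rcases eq_or_ne s v with rfl | hvs
      · rw [walkSet_self hrank, Finset.sum_singleton, pathProb_nil, cnt_nil, one_mul]
        rcases eq_or_ne (edst e₀) s with h | h
        · rw [L1 e₀ h, zero_mul]
        · have hz : (∑ p ∈ walkSet esrc edst rank (edst e₀) s, pathProb esrc t x p) = 0 := by
            refine Finset.sum_eq_zero fun p hp => ?_
            have hw := (mem_walkSet hrank).1 hp
            rcases List.eq_nil_or_concat p with rfl | ⟨q, e, rfl⟩
            · exact absurd hw h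
            · rw [List.concat_eq_append] at hw ⊢
              rcases isWalk_concat.1 hw with ⟨_, he⟩
              rw [pathProb_concat, L1 e he, zero_div, mul_zero]
          rw [hz, mul_zero]
      · rw [sum_walkSet_last hrank hvs]
        have hterm : ∀ e : E,
            (if edst e = v then
              ∑ q ∈ walkSet esrc edst rank s (esrc e),
                pathProb esrc t x (q ++ [e]) * cnt e₀ (q ++ [e]) else 0)
            = (if edst e = v then
                (x e₀ * ∑ q ∈ walkSet esrc edst rank (edst e₀) (esrc e), pathProb esrc t x q)
                  * (x e / vertexMass esrc t x (esrc e)) else 0)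
              + (if e = e₀ ∧ edst e = v then x e₀ else 0) := by
          intro e
          by_cases he : edst e = v
          · rw [if_pos he, if_pos he]
            have expand : ∀ q : List E,
                pathProb esrc t x (q ++ [e]) * cnt e₀ (q ++ [e])
                = (pathProb esrc t x q * cnt e₀ q) * (x e / vertexMass esrc t x (esrc e))
                  + (if e = e₀ then
                      pathProb esrc t x q * (x e / vertexMass esrc t x (esrc e)) else 0) := by
              intro q
              rw [pathProb_concat, cnt_concat]
              split <;> ring
            rw [Finset.sum_congr rfl fun q _ => expand q, Finset.sum_add_distrib,
              ← Finset.sum_mul]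
            have h1 : (∑ q ∈ walkSet esrc edst rank s (esrc e),
                pathProb esrc t x q * cnt e₀ q)
                = x e₀ * ∑ q ∈ walkSet esrc edst rank (edst e₀) (esrc e),
                    pathProb esrc t x q := by
              apply ih
              have h3 := hrank e; rw [he] at h3; omega
            rw [h1]
            congr 1
            by_cases he0 : e = e₀
            · rw [if_pos ⟨he0, he⟩]
              rw [Finset.sum_congr rfl fun q _ => if_pos he0, ← Finset.sum_mul]
              have hA : (∑ q ∈ walkSet esrc edst rank s (esrc e), pathProb esrc t x q)
                  = vertexMass esrc t x (esrc e) :=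
                A1 (rank (esrc e) + 1) _ (lt_add_one _)
              rw [hA, ← he0]
              rcases eq_or_ne (vertexMass esrc t x (esrc e)) 0 with h0 | h0
              · rw [h0, hmq e h0]; simp
              · field_simp
            · rw [if_neg (fun hc => he0 hc.1)]
              rw [Finset.sum_congr rfl fun q _ => if_neg he0, Finset.sum_const_zero]
          · rw [if_neg he, if_neg he, if_neg (fun hc => he hc.2), add_zero]
        rw [Finset.sum_congr rfl fun e _ => hterm e, Finset.sum_add_distrib]
        have hsecond : (∑ e : E, if e = e₀ ∧ edst e = v then x e₀ else 0)
            = if edst e₀ = v then x e₀ else 0 := by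
          rw [Finset.sum_eq_single e₀ ?_ ?_]
          · by_cases h : edst e₀ = v
            · rw [if_pos ⟨rfl, h⟩, if_pos h]
            · rw [if_neg (fun hc => h hc.2), if_neg h]
          · intro e _ hne; rw [if_neg (fun hc => hne hc.1)]
          · intro h; exact absurd (Finset.mem_univ e₀) h
        rw [hsecond]
        rcases eq_or_ne v (edst e₀) with rfl | hvw
        · rw [walkSet_self hrank, Finset.sum_singleton, pathProb_nil, mul_one, if_pos rfl]
          have hzero : ∀ e : E,
              (if edst e = edst e₀ then
                (x e₀ * ∑ q ∈ walkSet esrc edst rank (edst e₀) (esrc e), pathProb esrc t x q)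
                  * (x e / vertexMass esrc t x (esrc e)) else 0) = 0 := by
            intro e
            split
            next he =>
              have hlt : rank (esrc e) < rank (edst e₀) := by
                have h3 := hrank e; rw [he] at h3; exact h3
              have hne : edst e₀ ≠ esrc e := by
                intro hc; rw [← hc] at hlt; exact lt_irrefl _ hlt
              rw [walkSet_empty hrank hne (le_of_lt hlt), Finset.sum_empty, mul_zero, zero_mul]
            next => rfl
          rw [Finset.sum_congr rfl fun e _ => hzero e, Finset.sum_const_zero, zero_add]
        · rw [if_neg (fun hc => hvw hc.symm), add_zero]
          rw [sum_walkSet_last hrank (fun hc => hvw hc.symm) (f := pathProb esrc t x),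
            Finset.mul_sum]
          refine Finset.sum_congr rfl fun e _ => ?_
          by_cases he : edst e = v
          · rw [if_pos he, if_pos he]
            rw [Finset.sum_congr rfl fun q _ => pathProb_concat, ← Finset.sum_mul]
            ring
          · rw [if_neg he, if_neg he, mul_zero]
  have marg : ∀ e₀ : E,
      (∑ p ∈ walkSet esrc edst rank s t, pathProb esrc t x p * cnt e₀ p) = x e₀ := by
    intro e₀
    rw [N1 e₀ (rank t + 1) t (lt_add_one _)]
    rcases eq_or_lt_of_le (hx0 e₀) with h0 | hxe
    · rw [← h0, zero_mul]
    · have hB : (∑ p ∈ walkSet esrc edst rank (edst e₀) t, pathProb esrc t x p) = 1 := by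
        apply B1 (Finset.univ.sup rank - rank (edst e₀) + 1) _ (lt_add_one _)
        rcases eq_or_ne (edst e₀) t with h | h
        · exact Or.inr h
        · exact Or.inl (hmw_pos e₀ hxe h)
      rw [hB, mul_one]
  have hXW : X = walkSet esrc edst rank s t := by
    ext p
    rw [hX p, mem_walkSet hrank]
  have hplog : ∀ p : List E,
      pathProb esrc t x p * Real.log (pathProb esrc t x p)
      = ∑ e : E, pathProb esrc t x p
          * (cnt e p * Real.log (x e / vertexMass esrc t x (esrc e))) := by
    intro p
    have h1 := prod_mul_log_prod (p.map (fun e => x e / vertexMass esrc t x (esrc e)))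
      (by
        intro a ha
        rcases List.mem_map.1 ha with ⟨e, _, rfl⟩
        exact div_nonneg (hx0 e) (hm0 _))
    rw [List.map_map] at h1
    simp only [Function.comp_def] at h1
    have h2 := map_sum_eq_cnt (fun e => Real.log (x e / vertexMass esrc t x (esrc e))) p
    rw [h2] at h1
    show (p.map (fun e => x e / vertexMass esrc t x (esrc e))).prod
        * Real.log (p.map (fun e => x e / vertexMass esrc t x (esrc e))).prod = _
    rw [h1, Finset.mul_sum]
    rfl
  have hswap : (∑ p ∈ walkSet esrc edst rank s t,
        pathProb esrc t x p * Real.log (pathProb esrc t x p))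
      = ∑ e : E, x e * Real.log (x e / vertexMass esrc t x (esrc e)) := by
    rw [Finset.sum_congr rfl fun p _ => hplog p, Finset.sum_comm]
    refine Finset.sum_congr rfl fun e _ => ?_
    have h3 : ∀ p : List E,
        pathProb esrc t x p * (cnt e p * Real.log (x e / vertexMass esrc t x (esrc e)))
        = (pathProb esrc t x p * cnt e p) * Real.log (x e / vertexMass esrc t x (esrc e)) := by
      intro p; ring
    rw [Finset.sum_congr rfl fun p _ => h3 p, ← Finset.sum_mul, marg e]
  rw [hXW, hswap]
  have e1 : ∀ e : E, x e * Real.log (x e / vertexMass esrc t x (esrc e))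
      = x e * Real.log (x e) - x e * Real.log (vertexMass esrc t x (esrc e)) := by
    intro e
    rcases eq_or_lt_of_le (hx0 e) with h0 | hx
    · rw [← h0]; simp
    · have hm : vertexMass esrc t x (esrc e) ≠ 0 := by
        rcases eq_or_ne (esrc e) t with h | h
        · rw [h, hmt]; norm_num
        · exact ne_of_gt (lt_of_lt_of_le hx (hxle e h))
      rw [Real.log_div (ne_of_gt hx) hm]
      ring
  have e2 : ∑ e : E, x e * Real.log (vertexMass esrc t x (esrc e))
      = ∑ v : V, vertexMass esrc t x v * Real.log (vertexMass esrc t x v) := by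
    have h1 : ∀ e : E, x e * Real.log (vertexMass esrc t x (esrc e))
        = ∑ v : V, if esrc e = v then x e * Real.log (vertexMass esrc t x v) else 0 := by
      intro e
      have := Finset.sum_ite_eq (Finset.univ : Finset V) (esrc e)
        (fun v => x e * Real.log (vertexMass esrc t x v))
      simp only [Finset.mem_univ, if_true] at this
      exact this.symm
    rw [Finset.sum_congr rfl fun e _ => h1 e, Finset.sum_comm]
    refine Finset.sum_congr rfl fun v _ => ?_
    rcases eq_or_ne v t with rfl | hv
    · rw [hmt]
      simp
    · have h2 : ∀ e : E,
          (if esrc e = v then x e * Real.log (vertexMass esrc t x v) else 0)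
          = (if esrc e = v then x e else 0) * Real.log (vertexMass esrc t x v) := by
        intro e; split <;> simp
      rw [Finset.sum_congr rfl fun e _ => h2 e, ← Finset.sum_mul, ← hout v hv]
  rw [dilatedEntropy, Finset.sum_congr rfl fun e _ => e1 e, Finset.sum_sub_distrib, e2]
end

section
/- Let G = (V, E) be a finite DAG with source s and sink t such that every vertex lies on some s-t path, and let X be the set of s-t paths (as 0/1 vectors indexed by E), assumed to contain at least two paths. The dilated entropy ψ is differentiable and strictly convex on the relative interior C of the flow polytope co(X); moreover, for any sequence {x_n} in C converging to a boundary point of co(X), the gradient norms ‖∇ψ(x_n)‖₂ tend to infinity. -/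
open Classical Filter

/-- The dilated entropy regularizer on a DAG, as a function on Euclidean space
(indexed by edges). -/
noncomputable def dilEnt {V E : Type*} [Fintype V] [Fintype E] (esrc : E → V) (t : V)
    (x : EuclideanSpace ℝ E) : ℝ :=
  (∑ e : E, x e * Real.log (x e)) -
    ∑ v : V, (if v = t then 1 else ∑ e : E, if esrc e = v then x e else 0) *
      Real.log (if v = t then 1 else ∑ e : E, if esrc e = v then x e else 0)

/-- The flow polytope of a DAG with source `s` and sink `t`. -/
def flowPoly {V E : Type*} [Fintype V] [Fintype E] (esrc edst : E → V) (s t : V) :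
    Set (EuclideanSpace ℝ E) :=
  {x | (∀ e, 0 ≤ x e ∧ x e ≤ 1) ∧
    (∑ e : E, if esrc e = s then x e else 0) = 1 ∧
    (∑ e : E, if edst e = t then x e else 0) = 1 ∧
    ∀ v, v ≠ s → v ≠ t →
      (∑ e : E, if edst e = v then x e else 0) = (∑ e : E, if esrc e = v then x e else 0)}

open Real Topology

set_option linter.unusedSectionVars false
set_option linter.unusedVariables false

set_option linter.unusedSectionVars false
section X
variable {V E : Type*} [Fintype V] [Fintype E] {esrc edst : E → V} {s t : V} {rank : V → ℕ}

noncomputable def ind {E : Type*} [Fintype E] (p : List E) : EuclideanSpace ℝ E :=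
  WithLp.toLp 2 (fun e => if e ∈ p then 1 else 0)

noncomputable def outL {V E : Type*} [Fintype E] (esrc : E → V) (v : V) :
    EuclideanSpace ℝ E →L[ℝ] ℝ :=
  ∑ e : E, if esrc e = v then EuclideanSpace.proj e else 0

theorem outL_apply {V E : Type*} [Fintype E] (esrc : E → V) (v : V) (x : EuclideanSpace ℝ E) :
    outL esrc v x = ∑ e : E, if esrc e = v then x e else 0 := by
  simp only [outL, ContinuousLinearMap.sum_apply]
  refine Finset.sum_congr rfl fun e _ => ?_
  by_cases h : esrc e = v <;> simp [h]

theorem srcrank_walk (hrank : ∀ e, rank (esrc e) < rank (edst e)) {u v : V} {p : List E}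
    (hp : IsWalk esrc edst u v p) : ∀ e ∈ p, rank u ≤ rank (esrc e) := by
  induction p generalizing u with
  | nil => simp
  | cons e₀ es ih =>
    intro e he
    rcases List.mem_cons.1 he with rfl | he'
    · exact hp.1 ▸ le_rfl
    · exact le_trans (hp.1 ▸ (hrank e₀).le) (ih hp.2 e he')

theorem outL_ind_cons {e₀ : E} {es : List E} (he : e₀ ∉ es) (v : V) (f : E → V) :
    outL f v (ind (e₀ :: es)) = outL f v (ind es) + (if f e₀ = v then 1 else 0) := by
  rw [outL_apply, outL_apply]
  have : ∀ e : E, (if f e = v then ind (e₀ :: es) e else 0) =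
      (if f e = v then ind es e else 0) + (if e = e₀ then (if f e₀ = v then 1 else 0) else 0) := by
    intro e
    by_cases h1 : e = e₀
    · subst h1
      simp only [if_pos rfl, ind, List.mem_cons, true_or, if_pos, he]
      by_cases h2 : f e = v <;> simp [h2, he]
    · simp only [if_neg h1, add_zero, ind, List.mem_cons]
      by_cases h2 : f e = v <;> simp [h1, h2]
  rw [Finset.sum_congr rfl fun e _ => this e, Finset.sum_add_distrib,
    Finset.sum_ite_eq' Finset.univ e₀ (fun _ => if f e₀ = v then (1:ℝ) else 0),
    if_pos (Finset.mem_univ _)]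

theorem walk_flow (hrank : ∀ e, rank (esrc e) < rank (edst e)) {u : V} {p : List E}
    (hp : IsWalk esrc edst u t p) (v : V) :
    outL esrc v (ind p) - outL edst v (ind p) =
      (if v = u then 1 else 0) - (if v = t then 1 else 0) := by
  induction p generalizing u with
  | nil =>
    cases hp
    have h0 : ∀ f : E → V, outL f v (ind ([] : List E)) = 0 := by
      intro f; rw [outL_apply]
      exact Finset.sum_eq_zero fun e _ => by simp [ind]
    rw [h0, h0]; ring
  | cons e₀ es ih =>
    obtain ⟨hsrc, hwalk⟩ := hp
    have he₀ : e₀ ∉ es := by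
      intro hmem
      exact absurd (srcrank_walk hrank hwalk e₀ hmem) (not_le.2 (hrank e₀))
    rw [outL_ind_cons he₀ v esrc, outL_ind_cons he₀ v edst, hsrc]
    have := ih hwalk
    have hu : (if v = u then (1:ℝ) else 0) = if u = v then 1 else 0 := by
      by_cases h : u = v
      · simp [h]
      · simp [h, Ne.symm h]
    have hd : (if v = edst e₀ then (1:ℝ) else 0) = if edst e₀ = v then 1 else 0 := by
      by_cases h : edst e₀ = v
      · simp [h]
      · simp [h, Ne.symm h]
    rw [← hu, ← hd]
    linarith [ih hwalk, hd]

theorem mem_flowPoly_iff {x : EuclideanSpace ℝ E} :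
    x ∈ flowPoly esrc edst s t ↔ (∀ e, 0 ≤ x e ∧ x e ≤ 1) ∧
      outL esrc s x = 1 ∧ outL edst t x = 1 ∧
      ∀ v, v ≠ s → v ≠ t → outL edst v x = outL esrc v x := by
  simp only [flowPoly, Set.mem_setOf_eq, outL_apply]

theorem walk_mem_flowPoly (hrank : ∀ e, rank (esrc e) < rank (edst e))
    (hnes : ∀ e, edst e ≠ s) (hnet : ∀ e, esrc e ≠ t) (hst : s ≠ t)
    {p : List E} (hp : IsWalk esrc edst s t p) : ind p ∈ flowPoly esrc edst s t := by
  have h01 : ∀ e, 0 ≤ ind p e ∧ ind p e ≤ 1 := by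
    intro e; unfold ind; by_cases h : e ∈ p <;> simp [h]
  have hinns : outL edst s (ind p) = 0 := by
    rw [outL_apply]; exact Finset.sum_eq_zero fun e _ => by simp [hnes e]
  have houtt : outL esrc t (ind p) = 0 := by
    rw [outL_apply]; exact Finset.sum_eq_zero fun e _ => by simp [hnet e]
  have hs := walk_flow hrank hp s
  have ht := walk_flow hrank hp t
  rw [hinns, if_pos rfl, if_neg hst] at hs
  rw [houtt, if_neg (Ne.symm hst), if_pos rfl] at ht
  refine mem_flowPoly_iff.2 ⟨h01, by linarith, by linarith, fun v hvs hvt => ?_⟩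
  have hv := walk_flow hrank hp v
  rw [if_neg hvs, if_neg hvt] at hv
  linarith

theorem isWalk_append {u v w : V} {p q : List E} (hp : IsWalk esrc edst u v p)
    (hq : IsWalk esrc edst v w q) : IsWalk esrc edst u w (p ++ q) := by
  induction p generalizing u with
  | nil => cases hp; simpa using hq
  | cons e es ih => exact ⟨hp.1, ih hp.2⟩

theorem rank_le_walk (hrank : ∀ e, rank (esrc e) < rank (edst e)) {u v : V} {p : List E}
    (hp : IsWalk esrc edst u v p) : rank u ≤ rank v := by
  induction p generalizing u with
  | nil => cases hp; exact le_rfl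
  | cons e es ih => exact le_trans (hp.1 ▸ (hrank e).le) (ih hp.2)

theorem rank_lt_walk (hrank : ∀ e, rank (esrc e) < rank (edst e)) {u v : V} {e : E}
    {p : List E} (hp : IsWalk esrc edst u v (e :: p)) : rank u < rank v :=
  lt_of_lt_of_le (hp.1 ▸ hrank e) (rank_le_walk hrank hp.2)

/-- every edge lies on some s-t walk -/
theorem edge_walk (hcover : ∀ v : V, ∃ p q, IsWalk esrc edst s v p ∧ IsWalk esrc edst v t q)
    (e : E) : ∃ w : List E, IsWalk esrc edst s t w ∧ e ∈ w := by
  obtain ⟨p, -, hp, -⟩ := hcover (esrc e)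
  obtain ⟨-, q, -, hq⟩ := hcover (edst e)
  exact ⟨p ++ e :: q, isWalk_append hp ⟨rfl, hq⟩, by simp⟩
theorem cut_le_one (hrank : ∀ e, rank (esrc e) < rank (edst e))
    (hles : ∀ v, rank s ≤ rank v) (hlet : ∀ v, rank v ≤ rank t)
    (hnes : ∀ e, edst e ≠ s)
    {x : EuclideanSpace ℝ E} (h0 : ∀ e, 0 ≤ x e) (hs : outL esrc s x = 1)
    (hcons : ∀ v, v ≠ s → v ≠ t → outL edst v x = outL esrc v x) (e₀ : E) : x e₀ ≤ 1 := by
  set k := rank (esrc e₀) with hk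
  have hkt : k < rank t := lt_of_lt_of_le (hrank e₀) (hlet _)
  set S : Finset V := Finset.univ.filter (fun v => rank v ≤ k) with hS
  have hsS : s ∈ S := Finset.mem_filter.2 ⟨Finset.mem_univ _, hles _⟩
  have hsum : ∑ v ∈ S, (outL esrc v x - outL edst v x) = 1 := by
    rw [Finset.sum_eq_single_of_mem s hsS]
    · have hinns : outL edst s x = 0 := by
        rw [outL_apply]
        exact Finset.sum_eq_zero fun e _ => by simp [hnes e]
      rw [hs, hinns]; ring
    · intro v hv hvs
      have hvt : v ≠ t := by
        rintro rfl
        exact absurd (Finset.mem_filter.1 hv).2 (not_le.2 hkt)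
      rw [hcons v hvs hvt]; ring
  have hout : ∑ v ∈ S, outL esrc v x = ∑ e : E, if rank (esrc e) ≤ k then x e else 0 := by
    simp only [outL_apply]
    rw [Finset.sum_comm]
    refine Finset.sum_congr rfl fun e _ => ?_
    rw [Finset.sum_ite_eq S (esrc e) (fun _ => x e)]
    simp [hS]
  have hinn : ∑ v ∈ S, outL edst v x = ∑ e : E, if rank (edst e) ≤ k then x e else 0 := by
    simp only [outL_apply]
    rw [Finset.sum_comm]
    refine Finset.sum_congr rfl fun e _ => ?_
    rw [Finset.sum_ite_eq S (edst e) (fun _ => x e)]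
    simp [hS]
  rw [Finset.sum_sub_distrib, hout, hinn, ← Finset.sum_sub_distrib] at hsum
  have hterm : ∀ e : E, 0 ≤ (if rank (esrc e) ≤ k then x e else 0) -
      (if rank (edst e) ≤ k then x e else 0) := by
    intro e
    by_cases h2 : rank (edst e) ≤ k
    · have h1 : rank (esrc e) ≤ k := le_trans (hrank e).le h2
      simp [h1, h2]
    · by_cases h1 : rank (esrc e) ≤ k <;> simp [h1, h2, h0 e]
  have hterm₀ : x e₀ = (if rank (esrc e₀) ≤ k then x e₀ else 0) -
      (if rank (edst e₀) ≤ k then x e₀ else 0) := by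
    rw [if_pos le_rfl, if_neg (not_le.2 (hrank e₀))]; ring
  calc x e₀ = _ := hterm₀
    _ ≤ _ := Finset.single_le_sum (fun e _ => hterm e) (Finset.mem_univ e₀)
    _ = 1 := hsum

theorem span_flow {z : EuclideanSpace ℝ E} (hz : z ∈ affineSpan ℝ (flowPoly esrc edst s t)) :
    outL esrc s z = 1 ∧ outL edst t z = 1 ∧
      ∀ v, v ≠ s → v ≠ t → outL edst v z = outL esrc v z := by
  refine affineSpan_induction (p := fun y => outL esrc s y = 1 ∧ outL edst t y = 1 ∧
      ∀ v, v ≠ s → v ≠ t → outL edst v y = outL esrc v y) hz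
    (fun x hx => (mem_flowPoly_iff.1 hx).2) ?_
  rintro c u v w ⟨hu1, hu2, hu3⟩ ⟨hv1, hv2, hv3⟩ ⟨hw1, hw2, hw3⟩
  simp only [vsub_eq_sub, vadd_eq_add, map_add, map_sub, map_smulₛₗ, RingHom.id_apply,
    smul_eq_mul]
  refine ⟨by rw [hu1, hv1, hw1]; ring, by rw [hu2, hv2, hw2]; ring, fun v' hv's hv't => by
    rw [hu3 v' hv's hv't, hv3 v' hv's hv't, hw3 v' hv's hv't]⟩


theorem struct_facts (hrank : ∀ e, rank (esrc e) < rank (edst e))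
    (hcover : ∀ v : V, ∃ p q, IsWalk esrc edst s v p ∧ IsWalk esrc edst v t q) :
    (∀ v, rank s ≤ rank v) ∧ (∀ v, rank v ≤ rank t) ∧
      (∀ e, edst e ≠ s) ∧ (∀ e, esrc e ≠ t) := by
  have hles : ∀ v, rank s ≤ rank v := fun v => by
    obtain ⟨p, -, hp, -⟩ := hcover v; exact rank_le_walk hrank hp
  have hlet : ∀ v, rank v ≤ rank t := fun v => by
    obtain ⟨-, q, -, hq⟩ := hcover v; exact rank_le_walk hrank hq
  refine ⟨hles, hlet, fun e h => ?_, fun e h => ?_⟩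
  · have h1 := hrank e
    rw [h] at h1
    exact absurd (hles (esrc e)) (not_le.2 h1)
  · have h1 := hrank e
    rw [h] at h1
    exact absurd (hlet (edst e)) (not_le.2 h1)

theorem relint_eq (hrank : ∀ e, rank (esrc e) < rank (edst e))
    (hcover : ∀ v : V, ∃ p q, IsWalk esrc edst s v p ∧ IsWalk esrc edst v t q)
    (hst : s ≠ t) :
    intrinsicInterior ℝ (flowPoly esrc edst s t) =
      {x | x ∈ flowPoly esrc edst s t ∧ ∀ e, 0 < x e} := by
  obtain ⟨hles, hlet, hnes, hnet⟩ := struct_facts hrank hcover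
  ext x
  constructor
  · rintro hx
    have hxP : x ∈ flowPoly esrc edst s t := intrinsicInterior_subset hx
    refine ⟨hxP, fun e₀ => ?_⟩
    rcases lt_or_eq_of_le (((mem_flowPoly_iff.1 hxP).1 e₀).1) with h | h
    · exact h
    exfalso
    -- x e₀ = 0; build a walk through e₀ and move along the line away from its indicator
    obtain ⟨w, hw, hew⟩ := edge_walk hcover e₀
    have hyP : ind w ∈ flowPoly esrc edst s t := walk_mem_flowPoly hrank hnes hnet hst hw
    obtain ⟨xh, hxhint, hxhcoe⟩ := hx
    have hxspan : x ∈ affineSpan ℝ (flowPoly esrc edst s t) := hxhcoe ▸ xh.2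
    have hyspan : ind w ∈ affineSpan ℝ (flowPoly esrc edst s t) :=
      subset_affineSpan ℝ _ hyP
    set γ : ℝ → affineSpan ℝ (flowPoly esrc edst s t) := fun δ =>
      ⟨(1 + δ) • (x - ind w) + ind w, by
        simpa using AffineSubspace.smul_vsub_vadd_mem _ (1 + δ) hxspan hyspan hyspan⟩ with hγ
    have hγcont : Continuous γ := by
      refine Continuous.subtype_mk ?_ _
      exact (continuous_id.smul continuous_const).add continuous_const |>.comp
        (continuous_const.add continuous_id)
    have hγ0 : γ 0 = xh := by
      apply Subtype.ext
      simp [hγ, ← hxhcoe]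
    have hnhds : γ ⁻¹' (interior ((↑) ⁻¹' flowPoly esrc edst s t :
        Set (affineSpan ℝ (flowPoly esrc edst s t)))) ∈ nhds (0:ℝ) := by
      apply hγcont.continuousAt.preimage_mem_nhds
      rw [hγ0]
      exact isOpen_interior.mem_nhds hxhint
    have hnhds' : γ ⁻¹' (interior ((↑) ⁻¹' flowPoly esrc edst s t :
        Set (affineSpan ℝ (flowPoly esrc edst s t)))) ∈ nhdsWithin (0:ℝ) (Set.Ioi 0) :=
      nhdsWithin_le_nhds hnhds
    obtain ⟨δ, hδmem, hδpos⟩ := (nhdsGT_neBot (0:ℝ)).nonempty_of_mem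
      (Filter.inter_mem hnhds' self_mem_nhdsWithin)
    have hzP : ((1 + δ) • (x - ind w) + ind w : EuclideanSpace ℝ E) ∈ flowPoly esrc edst s t := by
      have h' := interior_subset hδmem
      simpa [hγ] using h'
    have hcoord := (mem_flowPoly_iff.1 hzP).1 e₀ |>.1
    have hindw : ind w e₀ = 1 := by simp [ind, hew]
    have : ((1 + δ) • (x - ind w) + ind w : EuclideanSpace ℝ E) e₀ = -δ := by
      have hx0 : x e₀ = 0 := h.symm
      simp only [PiLp.add_apply, PiLp.smul_apply, PiLp.sub_apply, hindw, hx0, smul_eq_mul]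
      ring
    rw [this] at hcoord
    have : (0:ℝ) < δ := hδpos
    linarith
  · rintro ⟨hxP, hxpos⟩
    refine ⟨⟨x, subset_affineSpan ℝ _ hxP⟩, ?_, rfl⟩
    rw [mem_interior]
    refine ⟨{z : affineSpan ℝ (flowPoly esrc edst s t) | ∀ e, 0 < (z : EuclideanSpace ℝ E) e},
      ?_, ?_, fun e => hxpos e⟩
    · -- positivity (together with span membership) implies flowPoly membership
      rintro ⟨z, hzspan⟩ hz
      obtain ⟨hzs, hzt, hzcons⟩ := span_flow hzspan
      refine mem_flowPoly_iff.2 ⟨fun e => ⟨(hz e).le, ?_⟩, hzs, hzt, hzcons⟩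
      exact cut_le_one hrank hles hlet hnes (fun e => (hz e).le) hzs hzcons e
    · -- openness
      have : {z : affineSpan ℝ (flowPoly esrc edst s t) |
          ∀ e, 0 < (z : EuclideanSpace ℝ E) e} =
          ⋂ e : E, (fun z : affineSpan ℝ (flowPoly esrc edst s t) =>
            (z : EuclideanSpace ℝ E) e) ⁻¹' Set.Ioi 0 := by
        ext z; simp
      rw [this]
      exact isOpen_iInter_of_finite fun e =>
        (isOpen_Ioi.preimage ((EuclideanSpace.proj e).continuous.comp continuous_subtype_val))


theorem dilEnt_eq (hnet : ∀ e, esrc e ≠ t) (x : EuclideanSpace ℝ E) :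
    dilEnt esrc t x = ∑ e : E, (x e * log (x e) - x e * log (outL esrc (esrc e) x)) := by
  unfold dilEnt
  rw [Finset.sum_sub_distrib]
  congr 1
  have key : ∀ v : V, (if v = t then (1:ℝ) else ∑ e : E, if esrc e = v then x e else 0) *
      log (if v = t then 1 else ∑ e : E, if esrc e = v then x e else 0) =
      ∑ e : E, if esrc e = v then x e * log (outL esrc v x) else 0 := by
    intro v
    by_cases hv : v = t
    · subst hv
      rw [if_pos rfl, log_one, mul_zero]
      exact (Finset.sum_eq_zero fun e _ => by simp [hnet e]).symm
    · rw [if_neg hv, ← outL_apply, outL_apply, Finset.sum_mul, ← outL_apply]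
      refine Finset.sum_congr rfl fun e _ => ?_
      by_cases h : esrc e = v <;> simp [h]
  rw [Finset.sum_congr rfl fun v _ => key v, Finset.sum_comm]
  refine Finset.sum_congr rfl fun e _ => ?_
  rw [Finset.sum_ite_eq Finset.univ (esrc e)
    (fun v => x e * log (outL esrc v x)), if_pos (Finset.mem_univ _)]


theorem outL_pos {x : EuclideanSpace ℝ E} (hx : ∀ e, 0 < x e) (e : E) :
    0 < outL esrc (esrc e) x := by
  rw [outL_apply]
  refine Finset.sum_pos' (fun f _ => ?_) ⟨e, Finset.mem_univ e, by simp [hx e]⟩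
  by_cases h : esrc f = esrc e <;> simp [h, (hx f).le]

noncomputable def dilDeriv (esrc : E → V) (x : EuclideanSpace ℝ E) :
    EuclideanSpace ℝ E →L[ℝ] ℝ :=
  ∑ e : E, ((log (x e) + 1) • (EuclideanSpace.proj e : EuclideanSpace ℝ E →L[ℝ] ℝ) -
    (x e • ((outL esrc (esrc e) x)⁻¹ • outL esrc (esrc e)) +
      log (outL esrc (esrc e) x) • (EuclideanSpace.proj e : EuclideanSpace ℝ E →L[ℝ] ℝ)))

theorem dilEnt_hasFDerivAt (hnet : ∀ e, esrc e ≠ t) {x : EuclideanSpace ℝ E}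
    (hx : ∀ e, 0 < x e) : HasFDerivAt (dilEnt esrc t) (dilDeriv esrc x) x := by
  have hfun : dilEnt esrc t = fun y : EuclideanSpace ℝ E =>
      ∑ e : E, (y e * log (y e) - y e * log (outL esrc (esrc e) y)) :=
    funext (dilEnt_eq hnet)
  rw [hfun, dilDeriv]
  refine HasFDerivAt.fun_sum fun e _ => HasFDerivAt.sub ?_ ?_
  · have h1 : HasFDerivAt (fun y : EuclideanSpace ℝ E => y e)
        (EuclideanSpace.proj e : EuclideanSpace ℝ E →L[ℝ] ℝ) x :=
      (EuclideanSpace.proj e : EuclideanSpace ℝ E →L[ℝ] ℝ).hasFDerivAt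
    exact (Real.hasDerivAt_mul_log (hx e).ne').comp_hasFDerivAt x h1
  · have h1 : HasFDerivAt (fun y : EuclideanSpace ℝ E => y e)
        (EuclideanSpace.proj e : EuclideanSpace ℝ E →L[ℝ] ℝ) x :=
      (EuclideanSpace.proj e : EuclideanSpace ℝ E →L[ℝ] ℝ).hasFDerivAt
    have h2 : HasFDerivAt (fun y : EuclideanSpace ℝ E => log (outL esrc (esrc e) y))
        ((outL esrc (esrc e) x)⁻¹ • outL esrc (esrc e)) x :=
      (Real.hasDerivAt_log (outL_pos hx e).ne').comp_hasFDerivAt x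
        (outL esrc (esrc e)).hasFDerivAt
    exact h1.mul h2

theorem outL_single (v : V) (f : E) :
    outL esrc v (EuclideanSpace.single f 1) = if esrc f = v then 1 else 0 := by
  rw [outL_apply]
  have : ∀ e : E, (if esrc e = v then (EuclideanSpace.single f (1:ℝ)) e else 0) =
      (if e = f then (if esrc f = v then (1:ℝ) else 0) else 0) := by
    intro e
    by_cases h1 : e = f
    · subst h1; by_cases h2 : esrc e = v <;> simp [h2]
    · by_cases h2 : esrc e = v <;> simp [h1, h2, EuclideanSpace.single_apply]
  rw [Finset.sum_congr rfl fun e _ => this e,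
    Finset.sum_ite_eq' Finset.univ f (fun _ => if esrc f = v then (1:ℝ) else 0),
    if_pos (Finset.mem_univ _)]

theorem dilDeriv_single {x : EuclideanSpace ℝ E} (hx : ∀ e, 0 < x e) (f : E) :
    dilDeriv esrc x (EuclideanSpace.single f 1) =
      log (x f) - log (outL esrc (esrc f) x) := by
  rw [dilDeriv, ContinuousLinearMap.sum_apply]
  have key : ∀ e : E, ((log (x e) + 1) • (EuclideanSpace.proj e : EuclideanSpace ℝ E →L[ℝ] ℝ) -
      (x e • ((outL esrc (esrc e) x)⁻¹ • outL esrc (esrc e)) +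
        log (outL esrc (esrc e) x) • (EuclideanSpace.proj e : EuclideanSpace ℝ E →L[ℝ] ℝ)))
      (EuclideanSpace.single f 1) =
      (if e = f then (log (x f) + 1 - log (outL esrc (esrc f) x)) else 0) -
      (if esrc f = esrc e then x e * (outL esrc (esrc f) x)⁻¹ else 0) := by
    intro e
    have hproj : ∀ (g : E) (y : EuclideanSpace ℝ E), (EuclideanSpace.proj g :
        EuclideanSpace ℝ E →L[ℝ] ℝ) y = y g := fun _ _ => rfl
    simp only [ContinuousLinearMap.sub_apply, ContinuousLinearMap.add_apply,
      ContinuousLinearMap.smul_apply, smul_eq_mul, hproj,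
      EuclideanSpace.single_apply, outL_single]
    by_cases h1 : e = f
    · subst h1
      simp only [eq_self_iff_true, if_true]
      ring
    · have h1' : ¬ (f = e) := fun h => h1 h.symm
      by_cases h2 : esrc f = esrc e
      · simp only [if_neg h1, if_pos h2]
        rw [← h2]
        ring
      · simp only [if_neg h1, if_neg h2]
        ring
  rw [Finset.sum_congr rfl fun e _ => key e, Finset.sum_sub_distrib,
    Finset.sum_ite_eq' Finset.univ f
      (fun _ => log (x f) + 1 - log (outL esrc (esrc f) x)), if_pos (Finset.mem_univ _)]
  have : ∑ e : E, (if esrc f = esrc e then x e * (outL esrc (esrc f) x)⁻¹ else 0) =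
      (∑ e : E, if esrc e = esrc f then x e else 0) * (outL esrc (esrc f) x)⁻¹ := by
    rw [Finset.sum_mul]
    refine Finset.sum_congr rfl fun e _ => ?_
    by_cases h : esrc f = esrc e
    · rw [if_pos h, if_pos h.symm]
    · rw [if_neg h, if_neg (fun hh : esrc e = esrc f => h hh.symm), zero_mul]
  rw [this, ← outL_apply, mul_inv_cancel₀ (outL_pos hx f).ne']
  ring


theorem logSum_le {a b A1 A2 B1 B2 : ℝ} (ha : 0 < a) (hb : 0 < b) (hab : a + b = 1)
    (hA1 : 0 < A1) (hA2 : 0 < A2) (hB1 : 0 < B1) (hB2 : 0 < B2) :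
    (a * A1 + b * A2) * (log (a * A1 + b * A2) - log (a * B1 + b * B2)) ≤
      a * (A1 * (log A1 - log B1)) + b * (A2 * (log A2 - log B2)) ∧
    (A1 * B2 ≠ A2 * B1 →
      (a * A1 + b * A2) * (log (a * A1 + b * A2) - log (a * B1 + b * B2)) <
        a * (A1 * (log A1 - log B1)) + b * (A2 * (log A2 - log B2))) := by
  set A := a * A1 + b * A2 with hA
  set B := a * B1 + b * B2 with hB
  have hApos : 0 < A := by positivity
  have hBpos : 0 < B := by positivity
  set w1 := a * B1 / B with hw1
  set w2 := b * B2 / B with hw2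
  have hw1p : 0 < w1 := by positivity
  have hw2p : 0 < w2 := by positivity
  have hw12 : w1 + w2 = 1 := by
    rw [hw1, hw2, ← add_div, hB, div_self hBpos.ne']
  set t1 := A1 / B1 with ht1
  set t2 := A2 / B2 with ht2
  have ht1p : (0:ℝ) ≤ t1 := by positivity
  have ht2p : (0:ℝ) ≤ t2 := by positivity
  have hcomb : w1 * t1 + w2 * t2 = A / B := by
    rw [hw1, hw2, ht1, ht2, hA]
    field_simp
  have hmain : ∀ φlhs φrhs : ℝ,
      φlhs = (w1 * t1 + w2 * t2) * log (w1 * t1 + w2 * t2) →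
      φrhs = w1 * (t1 * log t1) + w2 * (t2 * log t2) →
      B * φlhs = A * (log A - log B) ∧
      B * φrhs = a * (A1 * (log A1 - log B1)) + b * (A2 * (log A2 - log B2)) := by
    intro φlhs φrhs hl hr
    constructor
    · rw [hl, hcomb]
      rw [log_div hApos.ne' hBpos.ne']
      field_simp
    · rw [hr, ht1, ht2, log_div hA1.ne' hB1.ne', log_div hA2.ne' hB2.ne', hw1, hw2]
      field_simp
  obtain ⟨hl, hr⟩ := hmain _ _ rfl rfl
  constructor
  · have hj := Real.convexOn_mul_log.2 (Set.mem_Ici.2 ht1p) (Set.mem_Ici.2 ht2p)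
      hw1p.le hw2p.le hw12
    simp only [smul_eq_mul] at hj
    nlinarith [hj, hBpos]
  · intro hne
    have ht12 : t1 ≠ t2 := by
      intro h
      rw [ht1, ht2] at h
      exact hne ((div_eq_div_iff hB1.ne' hB2.ne').1 h)
    have hj := Real.strictConvexOn_mul_log.2 (Set.mem_Ici.2 ht1p) (Set.mem_Ici.2 ht2p)
      ht12 hw1p hw2p hw12
    simp only [smul_eq_mul] at hj
    nlinarith [hj, hBpos]


theorem convex_posFlow : Convex ℝ {x : EuclideanSpace ℝ E |
    x ∈ flowPoly esrc edst s t ∧ ∀ e, 0 < x e} := by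
  rintro x ⟨hx, hxp⟩ y ⟨hy, hyp⟩ a b ha hb hab
  obtain ⟨hxb, hxs, hxt, hxc⟩ := mem_flowPoly_iff.1 hx
  obtain ⟨hyb, hys, hyt, hyc⟩ := mem_flowPoly_iff.1 hy
  have hcoord : ∀ e, (a • x + b • y : EuclideanSpace ℝ E) e = a * x e + b * y e := by
    intro e; simp [PiLp.add_apply, PiLp.smul_apply, smul_eq_mul]
  have hout : ∀ (f : E → V) (v : V), outL f v (a • x + b • y) =
      a * outL f v x + b * outL f v y := by
    intro f v
    rw [map_add, map_smulₛₗ, map_smulₛₗ]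
    simp
  have hpos : ∀ e, 0 < (a • x + b • y : EuclideanSpace ℝ E) e := by
    intro e
    rw [hcoord]
    rcases eq_or_lt_of_le ha with rfl | ha'
    · simp only [zero_mul, zero_add] at hab ⊢
      rw [hab]; simpa using hyp e
    · have : 0 ≤ b * y e := mul_nonneg hb (hyp e).le
      nlinarith [hxp e]
  refine ⟨mem_flowPoly_iff.2 ⟨fun e => ⟨(hpos e).le, ?_⟩, ?_, ?_, fun v hvs hvt => ?_⟩, hpos⟩
  · rw [hcoord]
    nlinarith [(hxb e).2, (hyb e).2, (hxb e).1, (hyb e).1]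
  · rw [hout, hxs, hys]; linarith
  · rw [hout, hxt, hyt]; linarith
  · rw [hout, hout, hxc v hvs hvt, hyc v hvs hvt]

theorem ratio_rigid (hrank : ∀ e, rank (esrc e) < rank (edst e))
    (hnet : ∀ e, esrc e ≠ t) {x y : EuclideanSpace ℝ E}
    (hx : x ∈ flowPoly esrc edst s t) (hxpos : ∀ e, 0 < x e)
    (hy : y ∈ flowPoly esrc edst s t) (hypos : ∀ e, 0 < y e)
    (hratio : ∀ e, x e * outL esrc (esrc e) y = y e * outL esrc (esrc e) x) : x = y := by
  have key : ∀ n, ∀ e : E, rank (esrc e) < n → x e = y e := by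
    intro n
    induction n with
    | zero => exact fun e h => absurd h (Nat.not_lt_zero _)
    | succ n ih =>
      intro e he
      have hu : outL esrc (esrc e) x = outL esrc (esrc e) y := by
        by_cases hus : esrc e = s
        · rw [hus, (mem_flowPoly_iff.1 hx).2.1, (mem_flowPoly_iff.1 hy).2.1]
        · rw [← (mem_flowPoly_iff.1 hx).2.2.2 _ hus (hnet e),
            ← (mem_flowPoly_iff.1 hy).2.2.2 _ hus (hnet e), outL_apply, outL_apply]
          refine Finset.sum_congr rfl fun f _ => ?_
          by_cases hf : edst f = esrc e
          · rw [if_pos hf, if_pos hf]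
            refine ih f ?_
            have h1 := hrank f
            rw [hf] at h1
            omega
          · rw [if_neg hf, if_neg hf]
      have h0 := outL_pos (esrc := esrc) hxpos e
      have heq := hratio e
      rw [← hu] at heq
      exact mul_right_cancel₀ h0.ne' heq
  ext e
  exact key (rank (esrc e) + 1) e (Nat.lt_succ_self _)

theorem strictConvex_dilEnt (hrank : ∀ e, rank (esrc e) < rank (edst e))
    (hnet : ∀ e, esrc e ≠ t) :
    StrictConvexOn ℝ {x : EuclideanSpace ℝ E | x ∈ flowPoly esrc edst s t ∧ ∀ e, 0 < x e}
      (dilEnt esrc t) := by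
  refine ⟨convex_posFlow, ?_⟩
  rintro x ⟨hx, hxpos⟩ y ⟨hy, hypos⟩ hxy a b ha hb hab
  have hcoord : ∀ e, (a • x + b • y : EuclideanSpace ℝ E) e = a * x e + b * y e := by
    intro e; simp [PiLp.add_apply, PiLp.smul_apply, smul_eq_mul]
  have hout : ∀ v, outL esrc v (a • x + b • y) = a * outL esrc v x + b * outL esrc v y := by
    intro v
    rw [map_add, map_smulₛₗ, map_smulₛₗ]
    simp
  obtain ⟨e₀, he₀⟩ : ∃ e, x e * outL esrc (esrc e) y ≠ y e * outL esrc (esrc e) x := by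
    by_contra h
    push_neg at h
    exact hxy (ratio_rigid hrank hnet hx hxpos hy hypos h)
  have hle : ∀ e : E,
      ((a • x + b • y : EuclideanSpace ℝ E) e * log ((a • x + b • y : EuclideanSpace ℝ E) e) -
        (a • x + b • y : EuclideanSpace ℝ E) e *
          log (outL esrc (esrc e) (a • x + b • y))) ≤
      a * (x e * log (x e) - x e * log (outL esrc (esrc e) x)) +
        b * (y e * log (y e) - y e * log (outL esrc (esrc e) y)) := by
    intro e
    rw [hcoord, hout]
    have h1 := (logSum_le ha hb hab (hxpos e) (hypos e)
      (outL_pos (esrc := esrc) hxpos e) (outL_pos (esrc := esrc) hypos e)).1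
    nlinarith [h1]
  have hlt :
      ((a • x + b • y : EuclideanSpace ℝ E) e₀ * log ((a • x + b • y : EuclideanSpace ℝ E) e₀) -
        (a • x + b • y : EuclideanSpace ℝ E) e₀ *
          log (outL esrc (esrc e₀) (a • x + b • y))) <
      a * (x e₀ * log (x e₀) - x e₀ * log (outL esrc (esrc e₀) x)) +
        b * (y e₀ * log (y e₀) - y e₀ * log (outL esrc (esrc e₀) y)) := by
    rw [hcoord, hout]
    have h1 := (logSum_le ha hb hab (hxpos e₀) (hypos e₀)
      (outL_pos (esrc := esrc) hxpos e₀) (outL_pos (esrc := esrc) hypos e₀)).2 he₀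
    nlinarith [h1]
  have := Finset.sum_lt_sum (fun e (_ : e ∈ Finset.univ) => hle e)
    ⟨e₀, Finset.mem_univ e₀, hlt⟩
  rw [dilEnt_eq hnet, dilEnt_eq hnet, dilEnt_eq hnet]
  simp only [smul_eq_mul]
  rw [Finset.mul_sum, Finset.mul_sum, ← Finset.sum_add_distrib]
  exact this

theorem walk_zero (hrank : ∀ e, rank (esrc e) < rank (edst e))
    (hnes : ∀ e, edst e ≠ s) {xs : EuclideanSpace ℝ E} (hxs : xs ∈ flowPoly esrc edst s t) :
    ∀ (p : List E) (u : V), IsWalk esrc edst u t p → 0 < outL esrc u xs →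
      (∃ e ∈ p, xs e = 0) → ∃ f, xs f = 0 ∧ 0 < outL esrc (esrc f) xs := by
  intro p
  induction p with
  | nil => rintro u - - ⟨e, he, -⟩; cases he
  | cons e₀ es ih =>
    rintro u ⟨hsrc, hwalk⟩ hu ⟨e, hep, he0⟩
    by_cases h0 : xs e₀ = 0
    · exact ⟨e₀, h0, hsrc ▸ hu⟩
    · have hes : e ∈ es := by
        rcases List.mem_cons.1 hep with rfl | h
        · exact absurd he0 h0
        · exact h
      have hpos₀ : 0 < xs e₀ :=
        lt_of_le_of_ne ((mem_flowPoly_iff.1 hxs).1 e₀).1 (Ne.symm h0)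
      have hu't : edst e₀ ≠ t := by
        intro h
        obtain ⟨e', es', rfl⟩ : ∃ e' es', es = e' :: es' := by
          cases es with
          | nil => cases hes
          | cons a l => exact ⟨a, l, rfl⟩
        exact lt_irrefl _ (rank_lt_walk hrank (h ▸ hwalk))
      have hcons := (mem_flowPoly_iff.1 hxs).2.2.2 (edst e₀) (hnes e₀) hu't
      have hinn : xs e₀ ≤ outL edst (edst e₀) xs := by
        rw [outL_apply]
        have h1 : (if edst e₀ = edst e₀ then xs e₀ else 0) = xs e₀ := if_pos rfl
        calc xs e₀ = _ := h1.symm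
          _ ≤ _ := Finset.single_le_sum (f := fun f => if edst f = edst e₀ then xs f else 0)
            (fun f _ => by
              by_cases h : edst f = edst e₀ <;>
                simp [h, ((mem_flowPoly_iff.1 hxs).1 f).1])
            (Finset.mem_univ e₀)
      exact ih _ hwalk (by rw [← hcons]; linarith) ⟨e, hes, he0⟩

end X

theorem dilated_entropy_legendre {V E : Type*} [Fintype V] [Fintype E]
    (esrc edst : E → V) (s t : V)
    (rank : V → ℕ) (hrank : ∀ e, rank (esrc e) < rank (edst e))
    (hcover : ∀ v : V, ∃ p q, IsWalk esrc edst s v p ∧ IsWalk esrc edst v t q)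
    (htwo : ∃ p q : List E, p ≠ q ∧ IsWalk esrc edst s t p ∧ IsWalk esrc edst s t q) :
    DifferentiableOn ℝ (dilEnt esrc t) (intrinsicInterior ℝ (flowPoly esrc edst s t)) ∧
    StrictConvexOn ℝ (intrinsicInterior ℝ (flowPoly esrc edst s t)) (dilEnt esrc t) ∧
    ∀ xs ∈ flowPoly esrc edst s t, xs ∉ intrinsicInterior ℝ (flowPoly esrc edst s t) →
      ∀ xn : ℕ → EuclideanSpace ℝ E,
        (∀ n, xn n ∈ intrinsicInterior ℝ (flowPoly esrc edst s t)) →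
        Tendsto xn atTop (nhds xs) →
        Tendsto (fun n => ‖gradient (dilEnt esrc t) (xn n)‖) atTop atTop := by
  have hst : s ≠ t := by
    rintro rfl
    obtain ⟨p, q, hpq, hp, hq⟩ := htwo
    have hnil : ∀ r : List E, IsWalk esrc edst s s r → r = [] := by
      rintro (_ | ⟨e, es⟩) h
      · rfl
      · exact absurd (rank_lt_walk hrank h) (lt_irrefl _)
    exact hpq ((hnil p hp).trans (hnil q hq).symm)
  obtain ⟨hles, hlet, hnes, hnet⟩ := struct_facts hrank hcover
  rw [relint_eq hrank hcover hst]
  refine ⟨?_, strictConvex_dilEnt hrank hnet, ?_⟩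
  · intro x hx
    exact (dilEnt_hasFDerivAt hnet hx.2).differentiableAt.differentiableWithinAt
  · intro xs hxs hnot xn hxn hconv
    have hxs0 : ∃ e, xs e = 0 := by
      by_contra h
      push_neg at h
      exact hnot ⟨hxs, fun e =>
        lt_of_le_of_ne ((mem_flowPoly_iff.1 hxs).1 e).1 (Ne.symm (h e))⟩
    obtain ⟨e₁, he₁⟩ := hxs0
    obtain ⟨w, hw, hew⟩ := edge_walk hcover e₁
    have hspos : 0 < outL esrc s xs := by
      rw [(mem_flowPoly_iff.1 hxs).2.1]; norm_num
    obtain ⟨f, hf0, hfpos⟩ := walk_zero hrank hnes hxs w s hw hspos ⟨e₁, hew, he₁⟩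
    have hgradlb : ∀ n, log (outL esrc (esrc f) (xn n)) - log (xn n f) ≤
        ‖gradient (dilEnt esrc t) (xn n)‖ := by
      intro n
      have hD := dilEnt_hasFDerivAt hnet (hxn n).2
      have hG : HasGradientAt (dilEnt esrc t)
          ((InnerProductSpace.toDual ℝ _).symm (dilDeriv esrc (xn n))) (xn n) :=
        hasFDerivAt_iff_hasGradientAt.1 hD
      have hg := hG.gradient
      have hinner : @inner ℝ _ _ (gradient (dilEnt esrc t) (xn n))
          (EuclideanSpace.single f (1:ℝ)) =
          dilDeriv esrc (xn n) (EuclideanSpace.single f 1) := by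
        rw [hg]
        exact InnerProductSpace.toDual_symm_apply
      have hval := dilDeriv_single (esrc := esrc) (hxn n).2 f
      have hnorm : |@inner ℝ _ _ (gradient (dilEnt esrc t) (xn n))
          (EuclideanSpace.single f (1:ℝ))| ≤ ‖gradient (dilEnt esrc t) (xn n)‖ := by
        calc |@inner ℝ _ _ (gradient (dilEnt esrc t) (xn n)) (EuclideanSpace.single f (1:ℝ))|
            ≤ ‖gradient (dilEnt esrc t) (xn n)‖ * ‖EuclideanSpace.single f (1:ℝ)‖ :=
              abs_real_inner_le_norm _ _
          _ = ‖gradient (dilEnt esrc t) (xn n)‖ := by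
              rw [EuclideanSpace.norm_single]; simp
      rw [hinner, hval] at hnorm
      calc log (outL esrc (esrc f) (xn n)) - log (xn n f)
          = -(log (xn n f) - log (outL esrc (esrc f) (xn n))) := by ring
        _ ≤ |log (xn n f) - log (outL esrc (esrc f) (xn n))| := neg_le_abs _
        _ ≤ _ := hnorm
    have h1 : Tendsto (fun n => outL esrc (esrc f) (xn n)) atTop
        (𝓝 (outL esrc (esrc f) xs)) :=
      ((outL esrc (esrc f)).continuous.tendsto xs).comp hconv
    have h2 : Tendsto (fun n => log (outL esrc (esrc f) (xn n))) atTop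
        (𝓝 (log (outL esrc (esrc f) xs))) :=
      ((Real.continuousAt_log hfpos.ne').tendsto).comp h1
    have h3 : Tendsto (fun n => xn n f) atTop (𝓝[>] 0) := by
      rw [tendsto_nhdsWithin_iff]
      constructor
      · have hc := ((EuclideanSpace.proj (𝕜 := ℝ) f).continuous.tendsto xs).comp hconv
        have hxf : (EuclideanSpace.proj (𝕜 := ℝ) f) xs = 0 := hf0
        rw [hxf] at hc
        exact hc
      · exact Filter.Eventually.of_forall fun n => (hxn n).2 f
    have h4 : Tendsto (fun n => log (xn n f)) atTop atBot :=
      Real.tendsto_log_nhdsGT_zero.comp h3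
    have h4' : Tendsto (fun n => -log (xn n f)) atTop atTop :=
      tendsto_neg_atTop_iff.2 h4
    have h5 : Tendsto (fun n => log (outL esrc (esrc f) (xn n)) - log (xn n f))
        atTop atTop := by
      have := h4'.atTop_add h2
      refine this.congr fun n => ?_
      ring
    exact tendsto_atTop_mono hgradlb h5
end

section
/- Let G = (V, E) be a finite DAG with source s, sink t, every vertex on some s-t path. Let y ∈ ℝ^E be an edge-weight vector such that every s-t path has total weight in [−1, 1]. For each vertex v, let d_min(v) and d_max(v) be the weights of the shortest and longest paths from v to t under y. Define y'[(u,v)] := y[(u,v)] + d_min(v) − d_min(u). Then (a) y'[e] ≥ 0 for every edge e; (b) for every z ∈ span(X), ⟨y', z⟩ = ⟨y, z⟩ − d_min(s)·z[s] where z[s] := ∑_{e ∈ δ⁺(s)} z[e]; (c) for every x in the flow polytope co(X), 0 ≤ ⟨y', x⟩ ≤ 2. -/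
open Classical

private lemma sum_group_aux {V E : Type*} [Fintype V] [Fintype E] (φ : E → V)
    (g : V → ℝ) (z : E → ℝ) :
    ∑ e : E, g (φ e) * z e = ∑ v : V, g v * ∑ e : E, (if φ e = v then z e else 0) := by
  simp_rw [Finset.mul_sum, mul_ite, mul_zero]
  rw [Finset.sum_comm]
  apply Finset.sum_congr rfl
  intro e _
  rw [Finset.sum_eq_single (φ e)]
  · simp
  · intro v _ hv; simp [Ne.symm hv]
  · simp

private lemma telescope_aux {V E : Type*} [Fintype V] [Fintype E]
    (esrc edst : E → V) (s t : V) (hnos : ∀ e, edst e ≠ s)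
    (f : V → ℝ) (hft : f t = 0) (z : E → ℝ)
    (hz : ∀ v, v ≠ s → v ≠ t →
      (∑ e : E, if edst e = v then z e else 0) = (∑ e : E, if esrc e = v then z e else 0)) :
    ∑ e : E, (f (edst e) - f (esrc e)) * z e
      = - f s * (∑ e : E, if esrc e = s then z e else 0) := by
  have h1 : ∑ e : E, (f (edst e) - f (esrc e)) * z e
      = (∑ e : E, f (edst e) * z e) - ∑ e : E, f (esrc e) * z e := by
    rw [← Finset.sum_sub_distrib]; congr 1; ext e; ring
  rw [h1, sum_group_aux edst f z, sum_group_aux esrc f z, ← Finset.sum_sub_distrib]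
  rw [Finset.sum_eq_single s]
  · have hins : (∑ e : E, if edst e = s then z e else 0) = 0 := by
      apply Finset.sum_eq_zero; intro e _; simp [hnos e]
    rw [hins]; ring
  · intro v _ hv
    by_cases hvt : v = t
    · subst hvt; rw [hft]; ring
    · rw [hz v hv hvt]; ring
  · simp

theorem shifted_losses_properties {V E : Type*} [Fintype V] [Fintype E]
    (esrc edst : E → V) (s t : V)
    (rank : V → ℕ) (hrank : ∀ e, rank (esrc e) < rank (edst e))
    (hnos : ∀ e, edst e ≠ s) (hnot : ∀ e, esrc e ≠ t)
    (hcover : ∀ v : V, ∃ p q, IsWalk esrc edst s v p ∧ IsWalk esrc edst v t q)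
    (y : E → ℝ) (hy : ∀ p, IsWalk esrc edst s t p → |(p.map y).sum| ≤ 1)
    (dmin dmax : V → ℝ)
    (hdmin_le : ∀ v p, IsWalk esrc edst v t p → dmin v ≤ (p.map y).sum)
    (hdmin_ex : ∀ v, ∃ p, IsWalk esrc edst v t p ∧ dmin v = (p.map y).sum)
    (hdmax_ge : ∀ v p, IsWalk esrc edst v t p → (p.map y).sum ≤ dmax v)
    (hdmax_ex : ∀ v, ∃ p, IsWalk esrc edst v t p ∧ dmax v = (p.map y).sum) :
    -- (a) the shifted loss vector is nonnegative
    (∀ e, 0 ≤ y e + dmin (edst e) - dmin (esrc e)) ∧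
    -- (b) for any `z` satisfying flow conservation at internal vertices (span of paths)
    (∀ z : E → ℝ,
      (∀ v, v ≠ s → v ≠ t →
        (∑ e : E, if edst e = v then z e else 0) = (∑ e : E, if esrc e = v then z e else 0)) →
      ∑ e : E, (y e + dmin (edst e) - dmin (esrc e)) * z e
        = (∑ e : E, y e * z e) - dmin s * (∑ e : E, if esrc e = s then z e else 0)) ∧
    -- (c) for any `x` in the flow polytope
    (∀ x : E → ℝ, (∀ e, 0 ≤ x e ∧ x e ≤ 1) →
      (∑ e : E, if esrc e = s then x e else 0) = 1 →
      (∑ e : E, if edst e = t then x e else 0) = 1 →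
      (∀ v, v ≠ s → v ≠ t →
        (∑ e : E, if edst e = v then x e else 0) = (∑ e : E, if esrc e = v then x e else 0)) →
      0 ≤ ∑ e : E, (y e + dmin (edst e) - dmin (esrc e)) * x e ∧
        ∑ e : E, (y e + dmin (edst e) - dmin (esrc e)) * x e ≤ 2) := by
  -- walks starting at t are empty
  have hwalk_t : ∀ p, IsWalk esrc edst t t p → p = [] := by
    intro p hp
    cases p with
    | nil => rfl
    | cons e es => exact absurd hp.1 (hnot e)
  have hdmint : dmin t = 0 := by
    obtain ⟨p, hp, hd⟩ := hdmin_ex t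
    rw [hwalk_t p hp] at hd; simpa using hd
  have hdmaxt : dmax t = 0 := by
    obtain ⟨p, hp, hd⟩ := hdmax_ex t
    rw [hwalk_t p hp] at hd; simpa using hd
  -- (a)
  have ha : ∀ e, 0 ≤ y e + dmin (edst e) - dmin (esrc e) := by
    intro e
    obtain ⟨p, hp, hd⟩ := hdmin_ex (edst e)
    have hw : IsWalk esrc edst (esrc e) t (e :: p) := ⟨rfl, hp⟩
    have := hdmin_le (esrc e) (e :: p) hw
    simp only [List.map_cons, List.sum_cons] at this
    linarith [this, hd.le, hd.ge]
  -- (a') for dmax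
  have ha' : ∀ e, 0 ≤ dmax (esrc e) - dmax (edst e) - y e := by
    intro e
    obtain ⟨p, hp, hd⟩ := hdmax_ex (edst e)
    have hw : IsWalk esrc edst (esrc e) t (e :: p) := ⟨rfl, hp⟩
    have := hdmax_ge (esrc e) (e :: p) hw
    simp only [List.map_cons, List.sum_cons] at this
    linarith [this, hd.le, hd.ge]
  -- (b)
  have hb : ∀ z : E → ℝ,
      (∀ v, v ≠ s → v ≠ t →
        (∑ e : E, if edst e = v then z e else 0) = (∑ e : E, if esrc e = v then z e else 0)) →
      ∑ e : E, (y e + dmin (edst e) - dmin (esrc e)) * z e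
        = (∑ e : E, y e * z e) - dmin s * (∑ e : E, if esrc e = s then z e else 0) := by
    intro z hz
    have key := telescope_aux esrc edst s t hnos dmin hdmint z hz
    have hsplit : ∑ e : E, (y e + dmin (edst e) - dmin (esrc e)) * z e
        = (∑ e : E, y e * z e) + ∑ e : E, (dmin (edst e) - dmin (esrc e)) * z e := by
      rw [← Finset.sum_add_distrib]; congr 1; ext e; ring
    rw [hsplit, key]; ring
  refine ⟨ha, hb, ?_⟩
  -- (c)
  intro x hx hxs hxt hxc
  constructor
  · apply Finset.sum_nonneg
    intro e _
    exact mul_nonneg (ha e) (hx e).1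
  · -- bounds on dmin s and dmax s
    obtain ⟨p, hp, hd⟩ := hdmin_ex s
    have h1 : |dmin s| ≤ 1 := hd ▸ hy p hp
    obtain ⟨q, hq, hd'⟩ := hdmax_ex s
    have h2 : |dmax s| ≤ 1 := hd' ▸ hy q hq
    have hdmins : -1 ≤ dmin s := by
      have := abs_le.mp h1; linarith [this.1]
    have hdmaxs : dmax s ≤ 1 := by
      have := abs_le.mp h2; linarith [(abs_le.mp h2).2]
    -- ∑ y x ≤ dmax s
    have key := telescope_aux esrc edst s t hnos dmax hdmaxt x hxc
    rw [hxs] at key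
    have hnn : 0 ≤ ∑ e : E, (dmax (esrc e) - dmax (edst e) - y e) * x e :=
      Finset.sum_nonneg fun e _ => mul_nonneg (ha' e) (hx e).1
    have hsplit : ∑ e : E, (dmax (esrc e) - dmax (edst e) - y e) * x e
        = -(∑ e : E, (dmax (edst e) - dmax (esrc e)) * x e) - ∑ e : E, y e * x e := by
      rw [← Finset.sum_neg_distrib, ← Finset.sum_sub_distrib]
      congr 1; ext e; ring
    rw [hsplit, key] at hnn
    have hyx : ∑ e : E, y e * x e ≤ dmax s := by linarith
    have hbx := hb x hxc
    rw [hxs] at hbx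
    rw [hbx]
    linarith
end

section
/- Let d, m be positive integers with x[i] > 0 for all i, ∑_i x[i] = m, and z ∈ ℝ^d arbitrary. Define the local norm ‖z‖²_{∇²φ(x)} = ∑_{i=1}^d z[i]²·(2 + 1/(m·x[i])), where φ(x) = ∑_i (x[i]² + (1/m)·x[i]·ln x[i]). Then ‖z‖²_{∇²φ(x)} ≥ 2‖z‖_∞² + (1/m²)‖z‖_1². -/
theorem mset_local_norm_lower (d m : ℕ) (hd : 0 < d) (hm : 0 < m)
    (x z : Fin d → ℝ) (hx : ∀ i, 0 < x i) (hsum : ∑ i, x i = (m : ℝ)) :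
    2 * (⨆ i, |z i|) ^ 2 + (1 / (m : ℝ) ^ 2) * (∑ i, |z i|) ^ 2 ≤
      ∑ i, (z i) ^ 2 * (2 + 1 / ((m : ℝ) * x i)) := by
  have hm' : (0:ℝ) < m := by exact_mod_cast hm
  haveI : Nonempty (Fin d) := ⟨⟨0, hd⟩⟩
  -- RHS rewrite
  have hrhs : ∑ i, (z i) ^ 2 * (2 + 1 / ((m : ℝ) * x i))
      = 2 * ∑ i, (z i) ^ 2 + (1 / (m : ℝ)) * ∑ i, (z i) ^ 2 / x i := by
    rw [Finset.mul_sum, Finset.mul_sum, ← Finset.sum_add_distrib]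
    refine Finset.sum_congr rfl fun i _ => ?_
    have hxi := (hx i).ne'
    field_simp
  rw [hrhs]
  -- sup part
  have hsup : (⨆ i, |z i|) ^ 2 ≤ ∑ i, (z i) ^ 2 := by
    obtain ⟨i, hi⟩ := exists_eq_ciSup_of_finite (f := fun i => |z i|)
    rw [← hi, sq_abs]
    exact Finset.single_le_sum (fun j _ => sq_nonneg (z j)) (Finset.mem_univ i)
  -- Cauchy-Schwarz part
  have hcs : (∑ i, |z i|) ^ 2 ≤ (m : ℝ) * ∑ i, (z i) ^ 2 / x i := by
    have h := Finset.sq_sum_div_le_sum_sq_div Finset.univ (fun i => |z i|)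
      (g := x) (fun i _ => hx i)
    simp only [sq_abs] at h
    rw [hsum] at h
    calc (∑ i, |z i|) ^ 2 = (m:ℝ) * ((∑ i, |z i|) ^ 2 / m) := by field_simp
      _ ≤ (m : ℝ) * ∑ i, (z i) ^ 2 / x i := by
          exact mul_le_mul_of_nonneg_left h hm'.le
  have h2 : (1 / (m : ℝ) ^ 2) * (∑ i, |z i|) ^ 2 ≤ (1 / (m : ℝ)) * ∑ i, (z i) ^ 2 / x i := by
    calc (1 / (m : ℝ) ^ 2) * (∑ i, |z i|) ^ 2
        ≤ (1 / (m : ℝ) ^ 2) * ((m : ℝ) * ∑ i, (z i) ^ 2 / x i) := by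
          apply mul_le_mul_of_nonneg_left hcs (by positivity)
      _ = (1 / (m : ℝ)) * ∑ i, (z i) ^ 2 / x i := by field_simp
  linarith [mul_le_mul_of_nonneg_left hsup (by norm_num : (0:ℝ) ≤ 2)]
end
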